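/- arXiv:1111.1287 — 10 statements merged into one kernel-verified Lean document; each statement's English description precedes it below -/
import Mathlib

section
/- Let G be a torsion discrete abelian group and φ : G → G an endomorphism. Then h_A(φ) = ent(φ); that is, the supremum over all finite subsets C of G containing 0 of limsup_{n→∞} (log |T_n(φ,C)|)/n equals the supremum over all finite subgroups C of G of limsup_{n→∞} (log |T_n(φ,C)|)/n. -/
open MeasureTheory Filter Pointwise
open scoped ENNReal

noncomputable section

/-- The `n`-th `φ`-trajectory of `C`: `C + φ C + ⋯ + φ^{n-1} C` (pointwise sum of sets). -/
def traj {G : Type*} [AddCommGroup G] (φ : G → G) (C : Set G) (n : ℕ) : Set G :=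
  ∑ i ∈ Finset.range n, φ^[i] '' C

/-- The algebraic entropy of `φ` with respect to `C`, computed with the counting measure
(i.e. with cardinalities). -/
def entHcount {G : Type*} [AddCommGroup G] (φ : G → G) (C : Set G) : EReal :=
  Filter.limsup
    (fun n : ℕ => ENNReal.log ((traj φ C n).encard : ℝ≥0∞) / (n : EReal)) Filter.atTop

lemma traj_mono {G : Type*} [AddCommGroup G] (φ : G → G) {C D : Set G} (h : C ⊆ D) (n : ℕ) :
    traj φ C n ⊆ traj φ D n := by
  unfold traj
  induction n with
  | zero => simp
  | succ n ih =>
      rw [Finset.sum_range_succ, Finset.sum_range_succ]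
      exact Set.add_subset_add ih (Set.image_mono h)

lemma entHcount_mono {G : Type*} [AddCommGroup G] (φ : G → G) {C D : Set G} (h : C ⊆ D) :
    entHcount φ C ≤ entHcount φ D := by
  refine Filter.limsup_le_limsup (Eventually.of_forall fun n => ?_)
  refine EReal.div_le_div_right_of_nonneg (by exact_mod_cast Nat.cast_nonneg' n) ?_
  exact ENNReal.log_monotone (by exact_mod_cast Set.encard_mono (traj_mono φ h n))

/-- **Algebraic entropy and Weiss' entropy coincide on torsion groups.**
Let `G` be a torsion (discrete) abelian group and `φ : G → G` an endomorphism.  Then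
`h_A(φ) = ent(φ)`: the supremum over all finite subsets `C ∋ 0` of
`limsup (log |T_n(φ,C)|)/n` equals the supremum over all finite subgroups. -/
theorem entha_eq_ent_of_isTorsion
    {G : Type*} [AddCommGroup G] (hG : AddMonoid.IsTorsion G) (φ : G →+ G) :
    (⨆ (C : Set G) (_ : C.Finite ∧ (0 : G) ∈ C), entHcount (⇑φ) C) =
      ⨆ (H : AddSubgroup G) (_ : (H : Set G).Finite), entHcount (⇑φ) (H : Set G) := by
  apply le_antisymm
  · refine iSup₂_le fun C ⟨hCfin, _⟩ => ?_
    set H := AddSubgroup.closure C with hH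
    haveI : Finite C := hCfin
    haveI : AddGroup.FG H := inferInstance
    haveI : Finite H := AddCommGroup.finite_of_fg_torsion H
      (fun g => AddSubmonoid.isOfFinAddOrder_coe.1 (hG g))
    have hHfin : (H : Set G).Finite := H.carrier.toFinite
    calc entHcount (⇑φ) C ≤ entHcount (⇑φ) (H : Set G) :=
          entHcount_mono _ (AddSubgroup.subset_closure)
      _ ≤ _ := le_iSup₂ (f := fun (K : AddSubgroup G) (_ : (K : Set G).Finite) =>
          entHcount (⇑φ) (K : Set G)) H hHfin
  · refine iSup₂_le fun H hHfin => ?_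
    exact le_iSup₂ (f := fun C (_ : C.Finite ∧ (0 : G) ∈ C) => entHcount (⇑φ) C)
      (H : Set G) ⟨hHfin, H.zero_mem⟩
end
end

section
/- Let G and G' be LCA groups, φ an endomorphism of G and φ' an endomorphism of G'. For every compact neighborhood C of 0 in G and every compact neighborhood C' of 0 in G', one has H_A(φ × φ', C × C') ≤ H_A(φ, C) + H_A(φ', C') (computed with a product Haar measure on G × G'). In particular, h_A(φ × φ') ≤ h_A(φ) + h_A(φ'). Furthermore, if the sequence ((log μ(T_n(φ,C)))/n)_{n≥1} converges (μ a Haar measure on G), then H_A(φ × φ', C × C') = H_A(φ, C) + H_A(φ', C'). -/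
open MeasureTheory Filter Pointwise

noncomputable section

/-- The algebraic entropy of `φ` with respect to `C`, computed with the measure `μ`. -/
def entH {G : Type*} [AddCommGroup G] [MeasurableSpace G]
    (μ : Measure G) (φ : G → G) (C : Set G) : EReal :=
  Filter.limsup (fun n : ℕ => ENNReal.log (μ (traj φ C n)) / (n : EReal)) Filter.atTop

/-- The algebraic entropy of `φ`: the supremum of `entH μ φ C` over all compact
neighbourhoods `C` of `0`. -/
def entha {G : Type*} [AddCommGroup G] [TopologicalSpace G] [MeasurableSpace G]
    (μ : Measure G) (φ : G → G) : EReal :=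
  ⨆ (C : Set G) (_ : IsCompact C ∧ C ∈ nhds (0 : G)), entH μ φ C

namespace EntHProdAux

section SetLemmas

variable {G G' : Type*} [AddCommGroup G] [AddCommGroup G']

lemma prod_add_prod (A A' : Set G) (B B' : Set G') :
    (A ×ˢ B) + (A' ×ˢ B') = (A + A') ×ˢ (B + B') := by
  ext ⟨x, y⟩
  simp only [Set.mem_add, Set.mem_prod, Prod.exists]
  constructor
  · rintro ⟨a, b, ⟨hA, hB⟩, a', b', ⟨hA', hB'⟩, h⟩
    rw [Prod.mk_add_mk, Prod.mk.injEq] at h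
    exact ⟨⟨a, hA, a', hA', h.1⟩, ⟨b, hB, b', hB', h.2⟩⟩
  · rintro ⟨⟨a, hA, a', hA', hx⟩, ⟨b, hB, b', hB', hy⟩⟩
    exact ⟨a, b, ⟨hA, hB⟩, a', b', ⟨hA', hB'⟩, by rw [Prod.mk_add_mk, hx, hy]⟩

lemma traj_prod (f : G → G) (g : G' → G') (C : Set G) (C' : Set G') (n : ℕ) :
    traj (Prod.map f g) (C ×ˢ C') n = (traj f C n) ×ˢ (traj g C' n) := by
  induction n with
  | zero =>
      simp only [traj, Finset.range_zero, Finset.sum_empty]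
      ext ⟨x, y⟩
      simp [Set.mem_prod, Prod.ext_iff]
  | succ n ih =>
      have himg : Prod.map f^[n] g^[n] '' (C ×ˢ C') = (f^[n] '' C) ×ˢ (g^[n] '' C') :=
        Set.prod_image_image_eq.symm
      simp only [traj, Finset.sum_range_succ] at ih ⊢
      rw [ih, Prod.map_iterate, himg, prod_add_prod]

lemma traj_mono (f : G → G) {C D : Set G} (h : C ⊆ D) (n : ℕ) :
    traj f C n ⊆ traj f D n := by
  induction n with
  | zero => simp [traj]
  | succ n ih =>
      simp only [traj, Finset.sum_range_succ] at ih ⊢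
      exact Set.add_subset_add ih (Set.image_mono h)

lemma traj_one (f : G → G) (C : Set G) : traj f C 1 = C := by
  simp [traj]

lemma subset_traj (f : G → G) {C : Set G} (h0 : (0 : G) ∈ C) (hf0 : f 0 = 0) {n : ℕ}
    (hn : 1 ≤ n) : C ⊆ traj f C n := by
  obtain ⟨m, rfl⟩ := Nat.exists_eq_add_of_le hn
  induction m with
  | zero => rw [traj_one]
  | succ m ih =>
      refine (ih (by omega)).trans ?_
      show traj f C (1 + m) ⊆ traj f C (1 + (m + 1))
      rw [show 1 + (m + 1) = (1 + m) + 1 by omega]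
      simp only [traj, Finset.sum_range_succ]
      exact Set.subset_add_left _ ⟨0, h0, Function.iterate_fixed hf0 _⟩

end SetLemmas

section TopLemmas

variable {G : Type*} [AddCommGroup G] [TopologicalSpace G] [IsTopologicalAddGroup G]

lemma traj_isCompact {f : G → G} (hf : Continuous f) {C : Set G} (hC : IsCompact C) (n : ℕ) :
    IsCompact (traj f C n) := by
  induction n with
  | zero =>
      simp only [traj, Finset.range_zero, Finset.sum_empty]
      rw [show (0 : Set G) = {0} from rfl]
      exact isCompact_singleton
  | succ n ih =>
      simp only [traj, Finset.sum_range_succ] at ih ⊢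
      exact ih.add (hC.image (hf.iterate n))

end TopLemmas

section MeasLemmas

variable {G G' : Type*} [TopologicalSpace G] [MeasurableSpace G] [BorelSpace G]
  [TopologicalSpace G'] [MeasurableSpace G'] [BorelSpace G']

lemma mem_of_insep {s : Set (G × G')} (hs : MeasurableSet s) {x a : G} {y b : G'}
    (hx : Inseparable x a) (hy : Inseparable y b) : ((a, b) ∈ s ↔ (x, y) ∈ s) := by
  have hgen : MeasurableSet[MeasurableSpace.generateFrom
      (Set.image2 (· ×ˢ ·) { u : Set G | MeasurableSet u } { v : Set G' | MeasurableSet v })] s := by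
    rw [_root_.generateFrom_prod]; exact hs
  refine MeasurableSpace.generateFrom_induction _
    (fun t _ => ((a, b) ∈ t ↔ (x, y) ∈ t)) ?_ (by simp) (fun t _ h => by simp [h])
    (fun f _ h => by simp only [Set.mem_iUnion]; exact exists_congr h) s hgen
  rintro t ⟨u, hu, v, hv, rfl⟩ _
  simp only [Set.mem_prod]
  exact and_congr (hx.symm.mem_measurableSet_iff hu) (hy.symm.mem_measurableSet_iff hv)

lemma pi_prod_compact [R1Space G] [R1Space G']
    (μ : Measure G) (μ' : Measure G') (π : Measure (G × G'))
    (hπ : ∀ (E : Set G) (E' : Set G'), MeasurableSet E → MeasurableSet E' →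
      π (E ×ˢ E') = μ E * μ' E')
    {A : Set G} {B : Set G'} (hA : IsCompact A) (hB : IsCompact B) :
    π (A ×ˢ B) = μ A * μ' B := by
  have hsub : closure A ×ˢ closure B ⊆ toMeasurable π (A ×ˢ B) := by
    rintro ⟨x, y⟩ ⟨hxA, hyB⟩
    rw [hA.closure_eq_biUnion_inseparable] at hxA
    rw [hB.closure_eq_biUnion_inseparable] at hyB
    simp only [Set.mem_iUnion] at hxA hyB
    obtain ⟨a, ha, hxa⟩ := hxA
    obtain ⟨b, hb, hyb⟩ := hyB
    exact (mem_of_insep (measurableSet_toMeasurable π _) hxa.symm hyb.symm).1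
      (subset_toMeasurable π (A ×ˢ B) (Set.mk_mem_prod ha hb))
  have h1 : π (A ×ˢ B) = π (closure A ×ˢ closure B) := by
    refine le_antisymm (measure_mono (Set.prod_mono subset_closure subset_closure)) ?_
    calc π (closure A ×ˢ closure B) ≤ π (toMeasurable π (A ×ˢ B)) := measure_mono hsub
    _ = π (A ×ˢ B) := measure_toMeasurable _
  rw [h1, hπ _ _ isClosed_closure.measurableSet isClosed_closure.measurableSet,
    hA.measure_closure, hB.measure_closure]

end MeasLemmas

section ERealAux

lemma ereal_add_div (x y : ℝ) (n : ℕ) :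
    ((x : EReal) + (y : EReal)) / (n : EReal) = (x : EReal) / n + (y : EReal) / n := by
  rw [← EReal.coe_add, ← EReal.coe_coe_eq_natCast, ← EReal.coe_div, _root_.add_div,
    EReal.coe_add, EReal.coe_div, EReal.coe_div]

lemma tendsto_coe_div (r : ℝ) :
    Tendsto (fun n : ℕ => (r : EReal) / (n : EReal)) atTop (nhds 0) := by
  have h : ∀ n : ℕ, (r : EReal) / (n : EReal) = ((r / n : ℝ) : EReal) := by
    intro n; rw [← EReal.coe_coe_eq_natCast, ← EReal.coe_div]
  simp only [h]
  rw [show ((0 : EReal)) = ((0 : ℝ) : EReal) from rfl]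
  exact (EReal.tendsto_coe).2 (tendsto_const_div_atTop_nhds_zero_nat r)

end ERealAux

section EntHLemmas

lemma entH_mono {G : Type*} [AddCommGroup G] [MeasurableSpace G] (μ : Measure G) (f : G → G)
    {C D : Set G} (h : C ⊆ D) : entH μ f C ≤ entH μ f D := by
  refine limsup_le_limsup (Eventually.of_forall fun n => ?_)
  exact EReal.div_le_div_right_of_nonneg (by exact_mod_cast Nat.zero_le n)
    (ENNReal.log_le_log_iff.2 (measure_mono (traj_mono f h n)))

variable {G : Type*} [AddCommGroup G] [TopologicalSpace G] [IsTopologicalAddGroup G]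
  [MeasurableSpace G] [BorelSpace G]

lemma log_traj_real (μ : Measure G) [μ.IsAddHaarMeasure]
    {f : G → G} (hf : Continuous f) (hf0 : f 0 = 0)
    {C : Set G} (hCc : IsCompact C) (hCn : C ∈ nhds 0) {n : ℕ} (hn : 1 ≤ n) :
    ∃ x : ℝ, (x : EReal) = ENNReal.log (μ (traj f C n)) := by
  have hpos : 0 < μ (traj f C n) :=
    lt_of_lt_of_le (μ.measure_pos_of_mem_nhds hCn)
      (measure_mono (subset_traj f (mem_of_mem_nhds hCn) hf0 hn))
  have hfin : μ (traj f C n) < ⊤ := (traj_isCompact hf hCc n).measure_lt_top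
  exact ⟨(ENNReal.log (μ (traj f C n))).toReal,
    EReal.coe_toReal (by simp only [ne_eq, ENNReal.log_eq_top_iff]; exact hfin.ne)
      (by simp only [ne_eq, ENNReal.log_eq_bot_iff]; exact hpos.ne')⟩

lemma liminf_nonneg_aux (μ : Measure G) [μ.IsAddHaarMeasure]
    {f : G → G} (hf0 : f 0 = 0)
    {C : Set G} (hCc : IsCompact C) (hCn : C ∈ nhds 0) :
    0 ≤ liminf (fun n : ℕ => ENNReal.log (μ (traj f C n)) / (n : EReal)) atTop := by
  have hpos : 0 < μ C := μ.measure_pos_of_mem_nhds hCn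
  have hfin : μ C < ⊤ := hCc.measure_lt_top
  obtain ⟨r, hr⟩ : ∃ r : ℝ, (r : EReal) = ENNReal.log (μ C) :=
    ⟨(ENNReal.log (μ C)).toReal,
      EReal.coe_toReal (by simp only [ne_eq, ENNReal.log_eq_top_iff]; exact hfin.ne)
        (by simp only [ne_eq, ENNReal.log_eq_bot_iff]; exact hpos.ne')⟩
  have h0 : (0 : EReal) = liminf (fun n : ℕ => (r : EReal) / (n : EReal)) atTop :=
    (tendsto_coe_div r).liminf_eq.symm
  rw [h0]
  refine liminf_le_liminf ?_
  filter_upwards [eventually_ge_atTop 1] with n hn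
  rw [hr]
  exact EReal.div_le_div_right_of_nonneg (by exact_mod_cast Nat.zero_le n)
    (ENNReal.log_le_log_iff.2
      (measure_mono (subset_traj f (mem_of_mem_nhds hCn) hf0 hn)))

end EntHLemmas

end EntHProdAux

open EntHProdAux in
/-- **Subadditivity of the algebraic entropy on products.**
Let `G, G'` be LCA groups with Haar measures `μ, μ'`, and let `π` be a product Haar
measure on `G × G'`.  For continuous endomorphisms `φ` of `G` and `φ'` of `G'` and all
compact neighbourhoods `C ∋ 0` in `G`, `C' ∋ 0` in `G'` one has
`H_A(φ × φ', C × C') ≤ H_A(φ, C) + H_A(φ', C')`, hence `h_A(φ × φ') ≤ h_A(φ) + h_A(φ')`;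
moreover equality holds in the first inequality whenever `(log μ(T_n(φ,C)))/n` converges. -/
theorem entH_prod_le_add
    {G G' : Type*} [AddCommGroup G] [TopologicalSpace G] [IsTopologicalAddGroup G]
    [LocallyCompactSpace G] [MeasurableSpace G] [BorelSpace G]
    [AddCommGroup G'] [TopologicalSpace G'] [IsTopologicalAddGroup G']
    [LocallyCompactSpace G'] [MeasurableSpace G'] [BorelSpace G']
    (μ : Measure G) [μ.IsAddHaarMeasure] [μ.Regular]
    (μ' : Measure G') [μ'.IsAddHaarMeasure] [μ'.Regular]
    (π : Measure (G × G')) [π.IsAddHaarMeasure]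
    (hπ : ∀ (E : Set G) (E' : Set G'), MeasurableSet E → MeasurableSet E' →
      π (E ×ˢ E') = μ E * μ' E')
    (φ : G →+ G) (hφ : Continuous φ) (φ' : G' →+ G') (hφ' : Continuous φ') :
    (∀ (C : Set G) (C' : Set G'), IsCompact C → C ∈ nhds (0 : G) →
        IsCompact C' → C' ∈ nhds (0 : G') →
      entH π (Prod.map ⇑φ ⇑φ') (C ×ˢ C') ≤ entH μ (⇑φ) C + entH μ' (⇑φ') C') ∧
    entha π (Prod.map ⇑φ ⇑φ') ≤ entha μ (⇑φ) + entha μ' (⇑φ') ∧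
    (∀ (C : Set G) (C' : Set G'), IsCompact C → C ∈ nhds (0 : G) →
        IsCompact C' → C' ∈ nhds (0 : G') →
      (∃ l : EReal, Filter.Tendsto
          (fun n : ℕ => ENNReal.log (μ (traj (⇑φ) C n)) / (n : EReal)) Filter.atTop (nhds l)) →
      entH π (Prod.map ⇑φ ⇑φ') (C ×ˢ C') = entH μ (⇑φ) C + entH μ' (⇑φ') C') := by
  -- Main key computation for fixed compact neighbourhoods
  have key : ∀ (C : Set G) (C' : Set G'), IsCompact C → C ∈ nhds (0 : G) →
      IsCompact C' → C' ∈ nhds (0 : G') →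
      (entH π (Prod.map ⇑φ ⇑φ') (C ×ˢ C') ≤ entH μ (⇑φ) C + entH μ' (⇑φ') C') ∧
      ((∃ l : EReal, Filter.Tendsto
          (fun n : ℕ => ENNReal.log (μ (traj (⇑φ) C n)) / (n : EReal)) Filter.atTop (nhds l)) →
        entH π (Prod.map ⇑φ ⇑φ') (C ×ˢ C') = entH μ (⇑φ) C + entH μ' (⇑φ') C') := by
    intro C C' hCc hCn hC'c hC'n
    set a : ℕ → EReal := fun n => ENNReal.log (μ (traj (⇑φ) C n)) / (n : EReal) with ha_def
    set b : ℕ → EReal := fun n => ENNReal.log (μ' (traj (⇑φ') C' n)) / (n : EReal) with hb_def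
    set c : ℕ → EReal :=
      fun n => ENNReal.log (π (traj (Prod.map ⇑φ ⇑φ') (C ×ˢ C') n)) / (n : EReal) with hc_def
    -- the pointwise splitting, eventually
    have heq : ∀ᶠ n in atTop, c n = a n + b n := by
      filter_upwards [eventually_ge_atTop 1] with n hn
      have h1 : π (traj (Prod.map ⇑φ ⇑φ') (C ×ˢ C') n)
          = μ (traj (⇑φ) C n) * μ' (traj (⇑φ') C' n) := by
        rw [traj_prod]
        exact pi_prod_compact μ μ' π hπ (traj_isCompact hφ hCc n) (traj_isCompact hφ' hC'c n)
      obtain ⟨x, hx⟩ := log_traj_real μ hφ (map_zero φ) hCc hCn hn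
      obtain ⟨y, hy⟩ := log_traj_real μ' hφ' (map_zero φ') hC'c hC'n hn
      simp only [ha_def, hb_def, hc_def]
      rw [h1, ENNReal.log_mul_add, ← hx, ← hy, ereal_add_div x y n]
    have hca : limsup c atTop = limsup (fun n => a n + b n) atTop := limsup_congr heq
    -- nonnegativity of the liminfs
    have ha0 : (0 : EReal) ≤ liminf a atTop := liminf_nonneg_aux μ (map_zero φ) hCc hCn
    have hb0 : (0 : EReal) ≤ liminf b atTop := liminf_nonneg_aux μ' (map_zero φ') hC'c hC'n
    have haS : (0 : EReal) ≤ limsup a atTop := ha0.trans liminf_le_limsup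
    have hbS : (0 : EReal) ≤ limsup b atTop := hb0.trans liminf_le_limsup
    have haB : limsup a atTop ≠ ⊥ := by intro h; rw [h] at haS; simp at haS
    have hbB : limsup b atTop ≠ ⊥ := by intro h; rw [h] at hbS; simp at hbS
    have hle : entH π (Prod.map ⇑φ ⇑φ') (C ×ˢ C') ≤ entH μ (⇑φ) C + entH μ' (⇑φ') C' := by
      show limsup c atTop ≤ limsup a atTop + limsup b atTop
      rw [hca]
      exact EReal.limsup_add_le (Or.inl haB) (Or.inr hbB)
    refine ⟨hle, ?_⟩
    rintro ⟨l, hl⟩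
    refine le_antisymm hle ?_
    have hcomm : limsup (fun n => a n + b n) atTop = limsup (fun n => b n + a n) atTop :=
      limsup_congr (Eventually.of_forall fun n => add_comm _ _)
    have hlow : limsup b atTop + liminf a atTop ≤ limsup (fun n => b n + a n) atTop :=
      EReal.le_limsup_add
    have hli : liminf a atTop = limsup a atTop := by rw [hl.liminf_eq, hl.limsup_eq]
    show limsup a atTop + limsup b atTop ≤ limsup c atTop
    rw [hca, hcomm, add_comm (limsup a atTop), ← hli]
    exact hlow
  refine ⟨fun C C' hCc hCn hC'c hC'n => (key C C' hCc hCn hC'c hC'n).1, ?_,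
    fun C C' hCc hCn hC'c hC'n h => (key C C' hCc hCn hC'c hC'n).2 h⟩
  -- the entha inequality
  refine iSup_le fun D => iSup_le fun hD => ?_
  obtain ⟨hDc, hDn⟩ := hD
  have hKc : IsCompact (Prod.fst '' D) := hDc.image continuous_fst
  have hK'c : IsCompact (Prod.snd '' D) := hDc.image continuous_snd
  have hKn : Prod.fst '' D ∈ nhds (0 : G) := by
    simpa using isOpenMap_fst.image_mem_nhds hDn
  have hK'n : Prod.snd '' D ∈ nhds (0 : G') := by
    simpa using isOpenMap_snd.image_mem_nhds hDn
  have hsub : D ⊆ (Prod.fst '' D) ×ˢ (Prod.snd '' D) := fun x hx =>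
    ⟨Set.mem_image_of_mem _ hx, Set.mem_image_of_mem _ hx⟩
  calc entH π (Prod.map ⇑φ ⇑φ') D
      ≤ entH π (Prod.map ⇑φ ⇑φ') ((Prod.fst '' D) ×ˢ (Prod.snd '' D)) :=
        entH_mono π _ hsub
    _ ≤ entH μ (⇑φ) (Prod.fst '' D) + entH μ' (⇑φ') (Prod.snd '' D) :=
        (key _ _ hKc hKn hK'c hK'n).1
    _ ≤ entha μ (⇑φ) + entha μ' (⇑φ') :=
        add_le_add (le_iSup_of_le (Prod.fst '' D) (le_iSup_of_le ⟨hKc, hKn⟩ le_rfl))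
          (le_iSup_of_le (Prod.snd '' D) (le_iSup_of_le ⟨hK'c, hK'n⟩ le_rfl))
end
end

section
/- Let G be an LCA group and φ an automorphism of G. Then h_A(φ^{-1}) = h_A(φ) − log(mod_G(φ)). -/
open MeasureTheory Filter Pointwise

noncomputable section

section Aux

variable {G : Type*} [AddCommGroup G]

private lemma my_iterate_map_add (φ : G ≃+ G) (k : ℕ) (a b : G) :
    (⇑φ)^[k] (a + b) = (⇑φ)^[k] a + (⇑φ)^[k] b := by
  induction k with
  | zero => simp
  | succ n ih => simp [Function.iterate_succ_apply', ih, map_add]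

/-- `φ^[k]` as an additive monoid hom. -/
private def myIterHom (φ : G ≃+ G) (k : ℕ) : G →+ G :=
  AddMonoidHom.mk' (⇑φ)^[k] (my_iterate_map_add φ k)

private lemma my_image_traj (φ : G ≃+ G) (C : Set G) (n : ℕ) :
    (⇑φ)^[n] '' traj (⇑φ.symm) C (n + 1) = traj (⇑φ) C (n + 1) := by
  have hcoe : (⇑φ)^[n] = ⇑(myIterHom φ n) := rfl
  rw [traj, traj, hcoe, Set.image_finset_sum,
    ← Finset.sum_range_reflect (fun j => (⇑φ)^[j] '' C) (n + 1)]
  refine Finset.sum_congr rfl fun i hi => ?_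
  rw [Finset.mem_range] at hi
  have hi' : i ≤ n := Nat.lt_succ_iff.mp hi
  rw [← hcoe, ← Set.image_comp]
  have hfun : (⇑φ)^[n] ∘ (⇑φ.symm)^[i] = (⇑φ)^[n - i] := by
    funext x
    have h1 : (⇑φ)^[n] = (⇑φ)^[n - i] ∘ (⇑φ)^[i] := by
      rw [← Function.iterate_add, Nat.sub_add_cancel hi']
    have h2 : (⇑φ)^[i] ((⇑φ.symm)^[i] x) = x :=
      (Function.LeftInverse.iterate (φ.apply_symm_apply) i) x
    simp [h1, h2]
  rw [hfun]
  simp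

private lemma my_traj_isCompact [TopologicalSpace G] [IsTopologicalAddGroup G]
    {φ : G → G} (hφ : Continuous φ) {C : Set G} (hC : IsCompact C) (n : ℕ) :
    IsCompact (traj φ C n) := by
  induction n with
  | zero =>
    simp only [traj, Finset.range_zero, Finset.sum_empty]
    exact isCompact_singleton
  | succ m ih =>
    rw [traj, Finset.sum_range_succ, ← traj]
    exact ih.add (hC.image (hφ.iterate m))

private lemma my_zero_mem_iter_image {φ : G → G} (hφ0 : φ 0 = 0) {C : Set G}
    (h0 : (0 : G) ∈ C) (i : ℕ) : (0 : G) ∈ φ^[i] '' C :=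
  ⟨0, h0, Function.iterate_fixed hφ0 i⟩

private lemma my_subset_traj {φ : G → G} (hφ0 : φ 0 = 0) {C : Set G}
    (h0 : (0 : G) ∈ C) (n : ℕ) : C ⊆ traj φ C (n + 1) := by
  induction n with
  | zero => simp [traj, Finset.sum_range_one]
  | succ m ih =>
    rw [traj, Finset.sum_range_succ, ← traj]
    exact ih.trans (Set.subset_add_left _ (my_zero_mem_iter_image hφ0 h0 _))

end Aux

/-- **Algebraic entropy of the inverse automorphism.**
Let `G` be an LCA group with Haar measure `μ` and `φ` a topological automorphism of `G`
with modulus `mod_G(φ) = r`, i.e. `μ(φ E) = r · μ(E)` for every measurable `E`.  Then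
`h_A(φ⁻¹) = h_A(φ) - log (mod_G φ)`. -/
theorem entha_inv_eq_entha_sub_log_mod
    {G : Type*} [AddCommGroup G] [TopologicalSpace G] [IsTopologicalAddGroup G]
    [LocallyCompactSpace G] [MeasurableSpace G] [BorelSpace G]
    (μ : Measure G) [μ.IsAddHaarMeasure] [μ.Regular]
    (φ : G ≃+ G) (hφ : Continuous φ) (hφsymm : Continuous φ.symm)
    (r : ℝ) (hr : 0 < r)
    (hmod : ∀ E : Set G, MeasurableSet E → μ (⇑φ '' E) = ENNReal.ofReal r * μ E) :
    entha μ (⇑φ.symm) = entha μ (⇑φ) - ((Real.log r : ℝ) : EReal) := by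
  have hr0 : ENNReal.ofReal r ≠ 0 := by
    simp [ENNReal.ofReal_eq_zero, not_le, hr]
  have hrt : ENNReal.ofReal r ≠ ⊤ := ENNReal.ofReal_ne_top
  -- extend the modulus identity to arbitrary sets using outer regularity
  have hmod' : ∀ A : Set G, μ (⇑φ '' A) = ENNReal.ofReal r * μ A := by
    intro A
    apply le_antisymm
    · rw [Set.measure_eq_iInf_isOpen A μ]
      simp_rw [ENNReal.mul_iInf_of_ne hr0 hrt]
      refine le_iInf fun U => le_iInf fun hAU => le_iInf fun hU => ?_
      calc μ (⇑φ '' A) ≤ μ (⇑φ '' U) := measure_mono (Set.image_mono hAU)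
        _ = ENNReal.ofReal r * μ U := hmod U hU.measurableSet
    · rw [Set.measure_eq_iInf_isOpen (⇑φ '' A) μ]
      refine le_iInf fun V => le_iInf fun hAV => le_iInf fun hV => ?_
      have h1 : A ⊆ ⇑φ ⁻¹' V := fun x hx => hAV ⟨x, hx, rfl⟩
      have h2 : ⇑φ '' (⇑φ ⁻¹' V) = V := Set.image_preimage_eq V φ.surjective
      calc ENNReal.ofReal r * μ A
          ≤ ENNReal.ofReal r * μ (⇑φ ⁻¹' V) :=
            mul_le_mul_right (measure_mono h1) _
        _ = μ (⇑φ '' (⇑φ ⁻¹' V)) := (hmod _ (hV.preimage hφ).measurableSet).symm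
        _ = μ V := by rw [h2]
  have hmodIter : ∀ (k : ℕ) (A : Set G),
      μ ((⇑φ)^[k] '' A) = (ENNReal.ofReal r) ^ k * μ A := by
    intro k
    induction k with
    | zero => simp
    | succ m ih =>
      intro A
      rw [Function.iterate_succ', Set.image_comp, hmod', ih, pow_succ]
      ring
  -- the key claim, for each compact neighbourhood of 0
  have key : ∀ C : Set G, IsCompact C ∧ C ∈ nhds (0 : G) →
      entH μ (⇑φ.symm) C = entH μ (⇑φ) C - ((Real.log r : ℝ) : EReal) := by
    rintro C ⟨hCc, hC0⟩
    have h0C : (0 : G) ∈ C := mem_of_mem_nhds hC0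
    have hφs0 : φ.symm 0 = 0 := map_zero φ.symm
    -- positivity and finiteness of the measure of trajectories of φ.symm
    have hSne : ∀ n : ℕ, μ (traj (⇑φ.symm) C (n + 1)) ≠ 0 := by
      intro n
      have : 0 < μ C := μ.measure_pos_of_mem_nhds hC0
      exact fun h => (this.trans_le
        (measure_mono (my_subset_traj hφs0 h0C n))).ne' h
    have hSnt : ∀ n : ℕ, μ (traj (⇑φ.symm) C (n + 1)) ≠ ⊤ :=
      fun n => (my_traj_isCompact hφsymm hCc (n + 1)).measure_lt_top.ne
    -- the measure relation
    have hrel : ∀ n : ℕ, μ (traj (⇑φ) C (n + 1))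
        = (ENNReal.ofReal r) ^ n * μ (traj (⇑φ.symm) C (n + 1)) := by
      intro n
      rw [← my_image_traj φ C n, hmodIter]
    -- the real-valued logarithm of the measures of the φ.symm-trajectories
    set l : ℕ → ℝ := fun n => Real.log ((μ (traj (⇑φ.symm) C n)).toReal) with hl_def
    have hl : ∀ n : ℕ, ENNReal.log (μ (traj (⇑φ.symm) C (n + 1))) = ((l (n + 1) : ℝ) : EReal) :=
      fun n => ENNReal.log_pos_real (hSne n) (hSnt n)
    have hlogT : ∀ n : ℕ, ENNReal.log (μ (traj (⇑φ) C (n + 1)))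
        = (((n : ℝ) * Real.log r + l (n + 1) : ℝ) : EReal) := by
      intro n
      rw [hrel n, ENNReal.log_mul_add, ENNReal.log_pow,
        ENNReal.log_ofReal_of_pos hr, hl n]
      norm_cast
    -- the three sequences
    set a : ℕ → EReal := fun n => ENNReal.log (μ (traj (⇑φ) C n)) / (n : EReal) with ha_def
    set b : ℕ → EReal :=
      fun n => ENNReal.log (μ (traj (⇑φ.symm) C n)) / (n : EReal) with hb_def
    set creal : ℕ → ℝ := fun n => ((n : ℝ) - 1) / (n : ℝ) * Real.log r with hcreal_def
    set c : ℕ → EReal := fun n => ((creal n : ℝ) : EReal) with hc_def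
    have heq : ∀ᶠ n in atTop, a n = b n + c n := by
      filter_upwards [eventually_ge_atTop 1] with n hn
      rcases Nat.exists_eq_succ_of_ne_zero (by omega : n ≠ 0) with ⟨m, rfl⟩
      have hm0 : ((m : ℝ) + 1) ≠ 0 := by positivity
      show ENNReal.log (μ (traj (⇑φ) C (m + 1))) / ((m + 1 : ℕ) : EReal)
          = ENNReal.log (μ (traj (⇑φ.symm) C (m + 1))) / ((m + 1 : ℕ) : EReal) + c (m + 1)
      rw [hlogT m, hl m, hc_def, ← EReal.coe_coe_eq_natCast, ← EReal.coe_div, ← EReal.coe_div,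
        ← EReal.coe_add, EReal.coe_eq_coe_iff]
      simp only [hcreal_def]
      push_cast
      field_simp
      ring
    -- limits of the correction term
    have hcreal_tendsto : Tendsto creal atTop (nhds (Real.log r)) := by
      have h1 : Tendsto (fun n : ℕ => 1 - 1 / (n : ℝ)) atTop (nhds 1) := by
        simpa using (tendsto_const_nhds (x := (1:ℝ))).sub tendsto_one_div_atTop_nhds_zero_nat
      have h2 := h1.mul_const (Real.log r)
      rw [one_mul] at h2
      refine h2.congr' ?_
      filter_upwards [eventually_ge_atTop 1] with n hn
      have hn0 : (n : ℝ) ≠ 0 := Nat.cast_ne_zero.mpr (by omega)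
      simp only [hcreal_def]
      field_simp
    have hc_tendsto : Tendsto c atTop (nhds ((Real.log r : ℝ) : EReal)) :=
      EReal.tendsto_coe.mpr hcreal_tendsto
    have hc_limsup : limsup c atTop = ((Real.log r : ℝ) : EReal) := hc_tendsto.limsup_eq
    have hnegc_limsup : limsup (fun n => -(c n)) atTop = ((-Real.log r : ℝ) : EReal) := by
      have : Tendsto (fun n => -(c n)) atTop (nhds ((-Real.log r : ℝ) : EReal)) := by
        have := EReal.tendsto_coe.mpr hcreal_tendsto.neg
        simpa [hc_def, EReal.coe_neg] using this
      exact this.limsup_eq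
    -- the limsup computation
    have h1 : limsup a atTop ≤ limsup b atTop + ((Real.log r : ℝ) : EReal) := by
      rw [limsup_congr heq]
      have hle : limsup (b + c) atTop ≤ limsup b atTop + limsup c atTop :=
        EReal.limsup_add_le (Or.inr (by rw [hc_limsup]; exact EReal.coe_ne_top _))
          (Or.inr (by rw [hc_limsup]; exact EReal.coe_ne_bot _))
      rw [hc_limsup] at hle
      exact hle
    have heq2 : ∀ᶠ n in atTop, b n = a n + -(c n) := by
      filter_upwards [heq] with n h
      rw [h, hc_def, ← sub_eq_add_neg, EReal.add_sub_cancel_right]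
    have h2 : limsup b atTop ≤ limsup a atTop + ((-Real.log r : ℝ) : EReal) := by
      rw [limsup_congr heq2]
      have hle : limsup (a + fun n => -(c n)) atTop
          ≤ limsup a atTop + limsup (fun n => -(c n)) atTop :=
        EReal.limsup_add_le (Or.inr (by rw [hnegc_limsup]; exact EReal.coe_ne_top _))
          (Or.inr (by rw [hnegc_limsup]; exact EReal.coe_ne_bot _))
      rw [hnegc_limsup] at hle
      exact hle
    -- combine
    have hBA : limsup b atTop = limsup a atTop - ((Real.log r : ℝ) : EReal) := by
      apply le_antisymm
      · rw [EReal.le_sub_iff_add_le (Or.inl (EReal.coe_ne_bot _)) (Or.inl (EReal.coe_ne_top _))]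
        calc limsup b atTop + ((Real.log r : ℝ) : EReal)
            ≤ (limsup a atTop + ((-Real.log r : ℝ) : EReal)) + ((Real.log r : ℝ) : EReal) :=
              add_le_add_left h2 _
          _ = limsup a atTop := by
              rw [show ((-Real.log r : ℝ) : EReal) = -((Real.log r : ℝ) : EReal) from
                EReal.coe_neg _, ← sub_eq_add_neg, EReal.sub_add_cancel]
      · rw [EReal.sub_le_iff_le_add (Or.inl (EReal.coe_ne_bot _)) (Or.inl (EReal.coe_ne_top _))]
        exact h1
    exact hBA
  -- pass to the suprema
  apply le_antisymm
  · unfold entha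
    refine iSup₂_le fun C hC => ?_
    rw [key C hC, sub_eq_add_neg, sub_eq_add_neg]
    exact add_le_add_left
      (le_iSup₂ (f := fun (C : Set G) (_ : IsCompact C ∧ C ∈ nhds (0 : G)) => entH μ (⇑φ) C)
        C hC) _
  · rw [EReal.sub_le_iff_le_add (Or.inl (EReal.coe_ne_bot _)) (Or.inl (EReal.coe_ne_top _))]
    unfold entha
    refine iSup₂_le fun C hC => ?_
    have hC' : entH μ (⇑φ) C = entH μ (⇑φ.symm) C + ((Real.log r : ℝ) : EReal) := by
      rw [key C hC, EReal.sub_add_cancel]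
    rw [hC']
    exact add_le_add_left
      (le_iSup₂ (f := fun (C : Set G) (_ : IsCompact C ∧ C ∈ nhds (0 : G)) =>
        entH μ (⇑φ.symm) C) C hC) _
end
end

section
/- Let G be an LCA group, φ an endomorphism of G, and let {N_i : i ∈ I} be a family of open φ-invariant subgroups of G which is directed by inclusion and satisfies G = ⋃_{i∈I} N_i. Then h_A(φ) = sup_{i∈I} h_A(φ↾_{N_i}). -/
open MeasureTheory Filter Pointwise

noncomputable section

lemma image_traj {G H : Type*} [AddCommGroup G] [AddCommGroup H]
    (f : G →+ H) (φ : G → G) (ψ : H → H) (hcomm : ∀ x, f (φ x) = ψ (f x))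
    (C : Set G) (n : ℕ) : f '' traj φ C n = traj ψ (f '' C) n := by
  have hsc : Function.Semiconj f φ ψ := hcomm
  have hiter : ∀ k, f '' (φ^[k] '' C) = ψ^[k] '' (f '' C) := by
    intro k
    rw [← Set.image_comp, ← Set.image_comp]
    exact congrArg (· '' C) (funext (hsc.iterate_right k).eq)
  induction n with
  | zero =>
      simp only [traj, Finset.range_zero, Finset.sum_empty]
      rw [show (0 : Set G) = {0} from rfl, show (0 : Set H) = {0} from rfl,
        Set.image_singleton, map_zero]
  | succ n ih =>
      simp only [traj, Finset.sum_range_succ] at ih ⊢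
      rw [Set.image_add, ih, hiter]

lemma entH_comap_subgroup {G : Type*} [AddCommGroup G] [TopologicalSpace G]
    [MeasurableSpace G] (μ : Measure G) (φ : G → G) (N : AddSubgroup G)
    (hmeas : MeasurableSet (N : Set G)) (ψ : N → N)
    (hcomm : ∀ x : N, ((ψ x : G)) = φ (x : G)) (C : Set N) :
    entH (μ.comap (Subtype.val : N → G)) ψ C = entH μ φ (Subtype.val '' C) := by
  have hemb : MeasurableEmbedding (Subtype.val : N → G) :=
    MeasurableEmbedding.subtype_coe hmeas
  unfold entH
  congr 1
  funext n
  rw [hemb.comap_apply]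
  exact congrArg (fun s => ENNReal.log (μ s) / (n : EReal))
    (image_traj N.subtype ψ φ hcomm C n)

/-- **Continuity of the algebraic entropy on direct limits of open invariant subgroups.**
Let `G` be an LCA group with Haar measure `μ`, `φ` a continuous endomorphism of `G`, and
`{N i : i ∈ I}` a family of open `φ`-invariant subgroups of `G`, directed by inclusion,
with `G = ⋃ i, N i`.  Then `h_A(φ) = ⨆ i, h_A(φ↾_{N i})`, the entropy of each restriction
being computed with the restricted Haar measure. -/
theorem entha_eq_iSup_entha_restrict_of_directed
    {G : Type*} [AddCommGroup G] [TopologicalSpace G] [IsTopologicalAddGroup G]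
    [LocallyCompactSpace G] [MeasurableSpace G] [BorelSpace G]
    (μ : Measure G) [μ.IsAddHaarMeasure] [μ.Regular]
    (φ : G →+ G) (hφ : Continuous φ)
    {I : Type*} (N : I → AddSubgroup G)
    (hopen : ∀ i, IsOpen ((N i : Set G)))
    (hinv : ∀ i, ∀ x ∈ N i, φ x ∈ N i)
    (hdir : ∀ i j, ∃ k, N i ≤ N k ∧ N j ≤ N k)
    (hcover : ∀ x : G, ∃ i, x ∈ N i) :
    entha μ (⇑φ) =
      ⨆ i, entha (μ.comap (Subtype.val : N i → G))
        (fun x : N i => (⟨φ x, hinv i x x.2⟩ : N i)) := by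
  have hne : Nonempty I := ⟨(hcover 0).choose⟩
  have hmeas : ∀ i, MeasurableSet ((N i : Set G)) := fun i => (hopen i).measurableSet
  have hcomm : ∀ i (x : N i),
      (((⟨φ x, hinv i x x.2⟩ : N i) : G)) = φ (x : G) := fun _ _ => rfl
  apply le_antisymm
  · apply iSup₂_le
    intro C hC
    obtain ⟨i, hCi⟩ : ∃ i, C ⊆ (N i : Set G) :=
      hC.1.elim_directed_cover (fun i => (N i : Set G)) hopen
        (fun x _ => Set.mem_iUnion.2 (hcover x))
        (fun i j => (hdir i j).imp fun k hk => ⟨hk.1, hk.2⟩)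
    set C' : Set (N i) := (Subtype.val : N i → G) ⁻¹' C with hC'def
    have himg : Subtype.val '' C' = C :=
      Set.image_preimage_eq_of_subset (by simpa using hCi)
    have hCpt : IsCompact C' := by
      rw [(Topology.IsEmbedding.subtypeVal).isCompact_iff, himg]; exact hC.1
    have hCnhd : C' ∈ nhds (0 : N i) := by
      have : ContinuousAt (Subtype.val : N i → G) 0 :=
        continuous_subtype_val.continuousAt
      exact this.preimage_mem_nhds (by simpa using hC.2)
    have key : entH μ (⇑φ) C =
        entH (μ.comap (Subtype.val : N i → G))
          (fun x : N i => (⟨φ x, hinv i x x.2⟩ : N i)) C' := by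
      rw [entH_comap_subgroup μ (⇑φ) (N i) (hmeas i) _ (hcomm i), himg]
    rw [key]
    exact le_iSup_of_le i (le_iSup₂_of_le C' ⟨hCpt, hCnhd⟩ le_rfl)
  · apply iSup_le
    intro i
    apply iSup₂_le
    intro C' hC'
    have key : entH (μ.comap (Subtype.val : N i → G))
        (fun x : N i => (⟨φ x, hinv i x x.2⟩ : N i)) C' =
        entH μ (⇑φ) (Subtype.val '' C') :=
      entH_comap_subgroup μ (⇑φ) (N i) (hmeas i) _ (hcomm i) C'
    rw [key]
    have hCpt : IsCompact (Subtype.val '' C') := hC'.1.image continuous_subtype_val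
    have hCnhd : (Subtype.val '' C') ∈ nhds (0 : G) := by
      have hopenmap : IsOpenMap (Subtype.val : N i → G) :=
        (hopen i).isOpenMap_subtype_val
      have := hopenmap.image_mem_nhds hC'.2
      simpa using this
    exact le_iSup₂_of_le (Subtype.val '' C') ⟨hCpt, hCnhd⟩ le_rfl
end
end

section
/- Let G be an LCA group, φ an endomorphism of G, and C a compact neighborhood of 0 in G. Then 0 ≤ H^≤(φ, C) ≤ H_A(φ, C) ≤ h_A(φ). Moreover, if φ is an automorphism of G, then log(mod_G(φ)) ≤ H^≤(φ, C). -/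
open MeasureTheory Filter Pointwise

noncomputable section

/-- The minor `n`-th `φ`-trajectory of `C`: `C + φ^{n-1} C` (pointwise sum of sets). -/
def trajLe {G : Type*} [AddCommGroup G] (φ : G → G) (C : Set G) (n : ℕ) : Set G :=
  C + φ^[n - 1] '' C

/-- The lower algebraic entropy `H^≤(φ, C)`, computed on minor trajectories. -/
def entHle {G : Type*} [AddCommGroup G] [MeasurableSpace G]
    (μ : Measure G) (φ : G → G) (C : Set G) : EReal :=
  Filter.limsup (fun n : ℕ => ENNReal.log (μ (trajLe φ C n)) / (n : EReal)) Filter.atTop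

/-- **Basic estimates for the minor trajectories.**
Let `G` be an LCA group with Haar measure `μ`, `φ` a continuous endomorphism of `G` and
`C` a compact neighbourhood of `0`.  Then `0 ≤ H^≤(φ,C) ≤ H_A(φ,C) ≤ h_A(φ)`; moreover,
if `φ` is a topological automorphism with modulus `r` (i.e. `μ(φ E) = r·μ(E)` for all
measurable `E`) then `log r ≤ H^≤(φ, C)`. -/
theorem entHle_le_entH_le_entha
    {G : Type*} [AddCommGroup G] [TopologicalSpace G] [IsTopologicalAddGroup G]
    [LocallyCompactSpace G] [MeasurableSpace G] [BorelSpace G]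
    (μ : Measure G) [μ.IsAddHaarMeasure] [μ.Regular]
    (φ : G →+ G) (hφ : Continuous φ)
    (C : Set G) (hC : IsCompact C) (hC0 : C ∈ nhds (0 : G)) :
    (0 ≤ entHle μ (⇑φ) C ∧ entHle μ (⇑φ) C ≤ entH μ (⇑φ) C ∧
      entH μ (⇑φ) C ≤ entha μ (⇑φ)) ∧
    (∀ (ψ : G ≃+ G), Continuous ψ → Continuous ψ.symm → (⇑ψ : G → G) = ⇑φ →
      ∀ (r : ℝ), 0 < r →
        (∀ E : Set G, MeasurableSet E → μ (⇑ψ '' E) = ENNReal.ofReal r * μ E) →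
        ((Real.log r : ℝ) : EReal) ≤ entHle μ (⇑φ) C) := by
  classical
  have h0C : (0 : G) ∈ C := mem_of_mem_nhds hC0
  have hdivle : ∀ (a b : EReal) (n : ℕ), a ≤ b → a / (n : EReal) ≤ b / (n : EReal) := by
    intro a b n h
    apply EReal.div_le_div_right_of_nonneg _ h
    rw [← EReal.coe_coe_eq_natCast]
    exact_mod_cast Nat.cast_nonneg (α := ℝ) n
  have hcoediv : ∀ (q : ℝ) (n : ℕ), ((q / n : ℝ) : EReal) = (q : EReal) / (n : EReal) := by
    intro q n; rw [EReal.coe_div, EReal.coe_coe_eq_natCast]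
  have hμCtop : μ C ≠ ⊤ := hC.measure_lt_top.ne
  have hμCpos : 0 < μ C := Measure.measure_pos_of_mem_nhds μ hC0
  set x : ℝ := Real.log (μ C).toReal with hx
  have hlogC : ENNReal.log (μ C) = (x : EReal) := by
    rw [ENNReal.log]; simp [hμCpos.ne', hμCtop, hx]
  have hzero : ∀ k : ℕ, (⇑φ)^[k] (0 : G) = 0 := by
    intro k; induction k with
    | zero => rfl
    | succ k ih => rw [Function.iterate_succ_apply', ih, map_zero]
  have hCsub : ∀ n : ℕ, C ⊆ trajLe (⇑φ) C n := by
    intro n z hz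
    have h0 : (0 : G) ∈ (⇑φ)^[n - 1] '' C := ⟨0, h0C, hzero _⟩
    simpa [trajLe] using Set.add_mem_add hz h0
  -- claim A : 0 ≤ entHle
  have hA : 0 ≤ entHle μ (⇑φ) C := by
    have hg : Tendsto (fun n : ℕ => ((x / n : ℝ) : EReal)) atTop (nhds (0 : EReal)) := by
      rw [← EReal.coe_zero]
      exact EReal.tendsto_coe.2 (tendsto_const_div_atTop_nhds_zero_nat x)
    rw [show (0 : EReal) = limsup (fun n : ℕ => ((x / n : ℝ) : EReal)) atTop from hg.limsup_eq.symm,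
      entHle]
    have hev : (fun n : ℕ => ((x / n : ℝ) : EReal)) ≤ᶠ[atTop]
        fun n : ℕ => ENNReal.log (μ (trajLe (⇑φ) C n)) / (n : EReal) := by
      apply Eventually.of_forall
      intro n
      dsimp only
      rw [hcoediv]
      exact hdivle _ _ n (hlogC ▸ ENNReal.log_monotone (measure_mono (hCsub n)))
    exact Filter.limsup_le_limsup hev
  -- claim B : entHle ≤ entH
  have hsub2 : ∀ n : ℕ, 2 ≤ n → trajLe (⇑φ) C n ⊆ traj (⇑φ) C n := by
    intro n hn w hw
    rw [trajLe, Set.mem_add] at hw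
    obtain ⟨u, hu, v, hv, rfl⟩ := hw
    set g : ℕ → G := fun i => if i = 0 then u else if i = n - 1 then v else 0 with hgdef
    have hsum : ∑ i ∈ Finset.range n, g i = u + v := by
      rw [Finset.sum_eq_add 0 (n - 1) (by omega)
        (fun c hc hcc => by simp [hgdef, hcc.1, hcc.2])
        (fun h => absurd (Finset.mem_range.2 (by omega)) h)
        (fun h => absurd (Finset.mem_range.2 (by omega)) h)]
      have e0 : g 0 = u := if_pos rfl
      have e1 : g (n - 1) = v := by
        show (if n - 1 = 0 then u else if n - 1 = n - 1 then v else 0) = v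
        rw [if_neg (by omega), if_pos rfl]
      rw [e0, e1]
    rw [traj, ← hsum]
    apply Set.finset_sum_mem_finset_sum
    intro i _
    by_cases h0 : i = 0
    · subst h0; simpa [hgdef] using hu
    · by_cases h1 : i = n - 1
      · subst h1; simpa [hgdef, h0] using hv
      · simpa [hgdef, h0, h1] using ⟨0, h0C, hzero i⟩
  have hB : entHle μ (⇑φ) C ≤ entH μ (⇑φ) C := by
    have hev : (fun n : ℕ => ENNReal.log (μ (trajLe (⇑φ) C n)) / (n : EReal)) ≤ᶠ[atTop]
        fun n : ℕ => ENNReal.log (μ (traj (⇑φ) C n)) / (n : EReal) := by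
      filter_upwards [eventually_ge_atTop 2] with n hn
      exact hdivle _ _ n (ENNReal.log_monotone (measure_mono (hsub2 n hn)))
    exact Filter.limsup_le_limsup hev
  -- claim C : entH ≤ entha
  have hCsup : entH μ (⇑φ) C ≤ entha μ (⇑φ) :=
    le_iSup₂ (f := fun (D : Set G) (_ : IsCompact D ∧ D ∈ nhds (0 : G)) => entH μ (⇑φ) D)
      C ⟨hC, hC0⟩
  refine ⟨⟨hA, hB, hCsup⟩, ?_⟩
  -- automorphism part
  intro ψ hψc hψsc hψφ r hr hmod
  rw [← hψφ]
  set U : Set G := interior C with hU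
  have hUopen : IsOpen U := isOpen_interior
  have hUpos : 0 < μ U := hUopen.measure_pos μ ⟨0, mem_interior_iff_mem_nhds.2 hC0⟩
  have hUtop : μ U ≠ ⊤ := ((measure_mono interior_subset).trans_lt hC.measure_lt_top).ne
  set y : ℝ := Real.log (μ U).toReal with hy
  have hlogU : ENNReal.log (μ U) = (y : EReal) := by
    rw [ENNReal.log]; simp [hUpos.ne', hUtop, hy]
  have hopenmap : IsOpenMap ψ := IsOpenMap.of_inverse hψsc ψ.apply_symm_apply ψ.symm_apply_apply
  have hopen : ∀ k : ℕ, IsOpen ((⇑ψ)^[k] '' U) := by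
    intro k; induction k with
    | zero => simpa using hUopen
    | succ k ih => rw [Function.iterate_succ', Set.image_comp]; exact hopenmap _ ih
  have hmeas : ∀ k : ℕ, μ ((⇑ψ)^[k] '' U) = ENNReal.ofReal (r ^ k) * μ U := by
    intro k; induction k with
    | zero => simp
    | succ k ih =>
      rw [Function.iterate_succ', Set.image_comp, hmod _ (hopen k).measurableSet, ih,
        pow_succ, ENNReal.ofReal_mul (by positivity)]
      ring
  have hzero' : ∀ k : ℕ, (⇑ψ)^[k] (0 : G) = 0 := by
    intro k; induction k with
    | zero => rfl
    | succ k ih => rw [Function.iterate_succ_apply', ih, map_zero]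
  have hsubU : ∀ n : ℕ, (⇑ψ)^[n - 1] '' U ⊆ trajLe (⇑ψ) C n := by
    intro n z hz
    have hzC : z ∈ (⇑ψ)^[n - 1] '' C := Set.image_mono interior_subset hz
    simpa [trajLe] using Set.add_mem_add h0C hzC
  set L : ℝ := Real.log r with hL
  have hgR : Tendsto (fun n : ℕ => (((n : ℝ) - 1) * L + y) / n) atTop (nhds L) := by
    have h1 : Tendsto (fun n : ℕ => L + (y - L) / n) atTop (nhds L) := by
      simpa using tendsto_const_nhds.add (tendsto_const_div_atTop_nhds_zero_nat (y - L))
    apply h1.congr'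
    filter_upwards [eventually_ge_atTop 1] with n hn
    have hn0 : (n : ℝ) ≠ 0 := Nat.cast_ne_zero.2 (by omega)
    field_simp
    ring
  have hlim : limsup (fun n : ℕ => (((((n : ℝ) - 1) * L + y) / n : ℝ) : EReal)) atTop
      = (L : EReal) := (EReal.tendsto_coe.2 hgR).limsup_eq
  rw [← hlim, entHle]
  have hev : (fun n : ℕ => (((((n : ℝ) - 1) * L + y) / n : ℝ) : EReal)) ≤ᶠ[atTop]
      fun n : ℕ => ENNReal.log (μ (trajLe (⇑ψ) C n)) / (n : EReal) := by
    filter_upwards [eventually_ge_atTop 1] with n hn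
    rw [hcoediv]
    apply hdivle
    have e1 : ENNReal.log (ENNReal.ofReal (r ^ (n - 1)) * μ U)
      = ((((n : ℝ) - 1) * L + y : ℝ) : EReal) := by
      rw [ENNReal.log_mul_add, ENNReal.log_ofReal_of_pos (pow_pos hr _), hlogU,
        Real.log_pow, ← EReal.coe_add, Nat.cast_pred (by omega)]
    calc ((((n : ℝ) - 1) * L + y : ℝ) : EReal)
        = ENNReal.log (μ ((⇑ψ)^[n - 1] '' U)) := by rw [hmeas, e1]
      _ ≤ ENNReal.log (μ (trajLe (⇑ψ) C n)) :=
          ENNReal.log_monotone (measure_mono (hsubU n))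
  exact Filter.limsup_le_limsup hev
end
end

section
/- Let N be a positive integer and φ : ℚ^N → ℚ^N an endomorphism of the discrete group ℚ^N. Then h_A(φ) = sup { H_A(φ, E_m) : m a positive integer }. -/
open MeasureTheory Filter Pointwise
open scoped ENNReal

noncomputable section

/-- The finite subset `E_m = { (c_1,…,c_N) : c_i = j/m, j ∈ ℤ, |j| ≤ m }` of `ℚ^N`. -/
def Em (N m : ℕ) : Set (Fin N → ℚ) :=
  {c | ∀ i, ∃ j : ℤ, |j| ≤ (m : ℤ) ∧ c i = (j : ℚ) / (m : ℚ)}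

/-- Trajectories commute with equivariant additive maps. -/
lemma traj_image {G G' : Type*} [AddCommGroup G] [AddCommGroup G']
    (φ : G → G) (ψ : G' → G') (f : G →+ G') (hf : Function.Semiconj f φ ψ)
    (C : Set G) (n : ℕ) : traj ψ (f '' C) n = f '' traj φ C n := by
  unfold traj
  induction n with
  | zero => simp [← Set.singleton_zero]
  | succ n ih =>
      have hcomp : ψ^[n] '' (⇑f '' C) = ⇑f '' (φ^[n] '' C) := by
        rw [← Set.image_comp, ← Set.image_comp, (hf.iterate_right n).comp_eq]
      rw [Finset.sum_range_succ, Finset.sum_range_succ, ih, hcomp, ← Set.image_add]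

/-- Entropy is invariant under injective equivariant additive maps. -/
lemma entHcount_image_eq {G G' : Type*} [AddCommGroup G] [AddCommGroup G']
    (φ : G → G) (ψ : G' → G') (f : G →+ G') (hf : Function.Semiconj f φ ψ)
    (hinj : Function.Injective f) (C : Set G) :
    entHcount ψ (f '' C) = entHcount φ C := by
  unfold entHcount
  congr 1
  funext n
  rw [traj_image φ ψ f hf, hinj.encard_image]

lemma Em_finite (N m : ℕ) : (Em N m).Finite := by
  have h : Em N m ⊆
      (fun f : Fin N → ℤ => fun i => (f i : ℚ) / m) ''
        (Set.pi Set.univ fun _ => Set.Icc (-(m : ℤ)) m) := by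
    intro c hc
    choose j hj1 hj2 using hc
    exact ⟨j, fun i _ => by simpa [abs_le] using abs_le.mp (hj1 i),
      funext fun i => (hj2 i).symm⟩
  exact (((Set.Finite.pi fun _ => Set.finite_Icc _ _).image _)).subset h

lemma zero_mem_Em (N m : ℕ) : (0 : Fin N → ℚ) ∈ Em N m :=
  fun i => ⟨0, by simp⟩

/-- **First reduction for the algebraic entropy on `ℚ^N`.**
For every endomorphism `φ` of the discrete group `ℚ^N`,
`h_A(φ) = sup { H_A(φ, E_m) : m ∈ ℕ, m ≥ 1 }`. -/
theorem entha_rat_eq_iSup_Em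
    {N : ℕ} (hN : 0 < N) (φ : (Fin N → ℚ) →+ (Fin N → ℚ)) :
    (⨆ (C : Set (Fin N → ℚ)) (_ : C.Finite ∧ (0 : Fin N → ℚ) ∈ C), entHcount (⇑φ) C) =
      ⨆ (m : ℕ) (_ : 0 < m), entHcount (⇑φ) (Em N m) := by
  apply le_antisymm
  · refine iSup₂_le fun C hC => ?_
    obtain ⟨hCfin, hC0⟩ := hC
    -- common denominator
    set d : ℕ := ∏ c ∈ hCfin.toFinset, ∏ i, (c i).den with hd_def
    have hd_pos : 0 < d :=
      Finset.prod_pos fun c _ => Finset.prod_pos fun i _ => (c i).pos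
    have hd_dvd : ∀ c ∈ C, ∀ i : Fin N, (c i).den ∣ d := fun c hc i =>
      dvd_trans (Finset.dvd_prod_of_mem (fun i => (c i).den) (Finset.mem_univ i))
        (Finset.dvd_prod_of_mem (fun c => ∏ i, (c i).den) (hCfin.mem_toFinset.mpr hc))
    -- bound on numerators
    set B : ℕ := hCfin.toFinset.sup fun c => Finset.univ.sup fun i => (c i).num.natAbs
      with hB_def
    have hB : ∀ c ∈ C, ∀ i : Fin N, (c i).num.natAbs ≤ B := fun c hc i =>
      le_trans (Finset.le_sup (f := fun i => (c i).num.natAbs) (Finset.mem_univ i))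
        (Finset.le_sup (f := fun c => Finset.univ.sup fun i => (c i).num.natAbs)
          (hCfin.mem_toFinset.mpr hc))
    set K : ℕ := B + 1 with hK_def
    set m : ℕ := d * K with hm_def
    have hm_pos : 0 < m := Nat.mul_pos hd_pos (Nat.succ_pos _)
    have hKQ : ((K : ℚ))⁻¹ ≠ 0 := by positivity
    -- the scaling map
    set f : (Fin N → ℚ) →+ (Fin N → ℚ) :=
      AddMonoidHom.mk' (fun x => ((K : ℚ))⁻¹ • x) (fun a b => smul_add _ a b) with hf_def
    have hsemi : Function.Semiconj (⇑f) (⇑φ) (⇑φ) := fun x => by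
      show ((K : ℚ))⁻¹ • (φ x) = φ (((K : ℚ))⁻¹ • x)
      exact (map_rat_smul φ _ x).symm
    have hinj : Function.Injective (⇑f) := fun a b hab =>
      smul_right_injective (Fin N → ℚ) hKQ hab
    have hsub : f '' C ⊆ Em N m := by
      rintro x ⟨c, hc, rfl⟩ i
      set e : ℕ := d / (c i).den with he_def
      have he : (c i).den * e = d := Nat.mul_div_cancel' (hd_dvd c hc i) ▸ rfl
      refine ⟨(c i).num * (e : ℤ), ?_, ?_⟩
      · have h1 : |(c i).num| ≤ (B : ℤ) := by
          rw [Int.abs_eq_natAbs]; exact_mod_cast hB c hc i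
        have hden1 : 1 ≤ ((c i).den : ℤ) := by exact_mod_cast (c i).pos
        have he' : ((c i).den : ℤ) * (e : ℤ) = (d : ℤ) := by exact_mod_cast he
        have hE : (0:ℤ) ≤ (e : ℤ) := Int.natCast_nonneg e
        rw [abs_mul, abs_of_nonneg hE]
        have : (m : ℤ) = ((c i).den * e) * (K : ℤ) := by
          rw [hm_def]; push_cast [← he]; ring
        rw [this]
        have hBK : (B : ℤ) < (K : ℤ) := by exact_mod_cast Nat.lt_succ_self B
        nlinarith [abs_nonneg (c i).num]
      · show ((K : ℚ))⁻¹ • c i = _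
        have hden : ((c i).den : ℚ) ≠ 0 := by exact_mod_cast (c i).pos.ne'
        have hKne : ((K : ℚ)) ≠ 0 := by positivity
        have hmne : ((m : ℚ)) ≠ 0 := by exact_mod_cast hm_pos.ne'
        have key : (c i) * ((c i).den : ℚ) = ((c i).num : ℚ) := by
          have h := Rat.num_div_den (c i)
          calc c i * ((c i).den : ℚ)
              = (((c i).num : ℚ) / ((c i).den : ℚ)) * ((c i).den : ℚ) := by rw [h]
            _ = _ := div_mul_cancel₀ _ hden
        have hmq : (m : ℚ) = ((c i).den * e * K : ℚ) := by
          rw [hm_def]; push_cast [← he]; ring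
        rw [smul_eq_mul, eq_div_iff hmne, hmq]
        push_cast
        field_simp
        linear_combination (e : ℚ) * key
    calc entHcount (⇑φ) C = entHcount (⇑φ) (f '' C) :=
          (entHcount_image_eq (⇑φ) (⇑φ) f hsemi hinj C).symm
      _ ≤ entHcount (⇑φ) (Em N m) := entHcount_mono (⇑φ) hsub
      _ ≤ _ := le_iSup₂_of_le m hm_pos le_rfl
  · exact iSup₂_le fun m hm =>
      le_iSup₂_of_le (Em N m) ⟨Em_finite N m, zero_mem_Em N m⟩ le_rfl
end
end

section
/- Let N be a positive integer, P a finite set of prime numbers, and k ≥ 3 an integer. Consider the LCA group G = ℝ^N × ∏_{p∈P} ℚ_p^N, the diagonal embedding α : ℚ^N → G given coordinatewise by the inclusions ℚ ⊆ ℝ and ℚ ⊆ ℚ_p, and the compact set 𝒟(1/k) = [−1/k, 1/k]^N × ∏_{p∈P} ℤ_p^N ⊆ G. Then: (1) if x, y ∈ (Z_(P))^N and x ≠ y, then (α(x) + 𝒟(1/k)) ∩ (α(y) + 𝒟(1/k)) = ∅; (2) if F ⊆ (Z_(P))^N is finite, then μ(α(F) + 𝒟(1/k)) = |F|, where μ is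 the Haar measure on G normalized so that μ(𝒟(1/k)) = 1. -/
open MeasureTheory Filter Pointwise
open scoped ENNReal

noncomputable section

/-- The subring `Z_(P)` of `ℚ` generated by `1` and the elements `1/p` for `p ∈ P`. -/
def ZP (P : Set ℕ) : Subring ℚ :=
  Subring.closure {x : ℚ | ∃ p ∈ P, x = ((p : ℚ))⁻¹}

noncomputable instance (q : ℕ) [Fact q.Prime] : MeasurableSpace ℚ_[q] := borel _
instance (q : ℕ) [Fact q.Prime] : BorelSpace ℚ_[q] := ⟨rfl⟩

/-- The valuation subring of `ℚ` at a prime `r`. -/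
def padicValSubring (r : ℕ) [Fact r.Prime] : Subring ℚ where
  carrier := {x : ℚ | padicNorm r x ≤ 1}
  one_mem' := by simp [padicNorm.one]
  zero_mem' := by simp [padicNorm.zero]
  mul_mem' := by
    intro a b ha hb
    simp only [Set.mem_setOf_eq] at *
    rw [padicNorm.mul]
    exact mul_le_one₀ ha (padicNorm.nonneg _) hb
  add_mem' := by
    intro a b ha hb
    simp only [Set.mem_setOf_eq] at *
    exact le_trans (padicNorm.nonarchimedean) (max_le ha hb)
  neg_mem' := by
    intro a ha
    simpa only [Set.mem_setOf_eq, padicNorm.neg] using ha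

lemma ZP_le_padicValSubring {ι : Type*} (p : ι → ℕ) [hp : ∀ i, Fact (p i).Prime]
    (r : ℕ) [hr : Fact r.Prime] (hrp : r ∉ Set.range p) :
    ZP (Set.range p) ≤ padicValSubring r := by
  rw [ZP, Subring.closure_le]
  rintro x ⟨q, ⟨i, rfl⟩, rfl⟩
  have hne : ¬ r ∣ p i := by
    intro h
    exact hrp ⟨i, ((Nat.prime_dvd_prime_iff_eq hr.out (hp i).out).mp h).symm⟩
  have h1 : padicNorm r ((p i : ℚ)) = 1 := (padicNorm.nat_eq_one_iff _).mpr hne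
  show padicNorm r ((p i : ℚ))⁻¹ ≤ 1
  have hne0 : ((p i : ℚ)) ≠ 0 := by exact_mod_cast (hp i).out.ne_zero
  have h2 : padicNorm r (((p i : ℚ))⁻¹ * (p i)) =
      padicNorm r ((p i : ℚ))⁻¹ * padicNorm r ((p i : ℚ)) := padicNorm.mul _ _
  rw [inv_mul_cancel₀ hne0, padicNorm.one, h1, mul_one] at h2
  rw [← h2]

lemma den_eq_one_of_padicNorm_le_one {q : ℚ}
    (h : ∀ r : ℕ, r.Prime → padicNorm r q ≤ 1) : q.den = 1 := by
  by_contra hden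
  obtain ⟨r, hr, hrd⟩ := Nat.exists_prime_and_dvd hden
  haveI : Fact r.Prime := ⟨hr⟩
  have hq : q ≠ 0 := by
    intro h0; rw [h0] at hden; exact hden rfl
  have hnum : ¬ (r : ℤ) ∣ q.num := by
    intro hd
    have : r ∣ q.num.natAbs := Int.natCast_dvd_natCast.mp (by simpa using Int.dvd_natAbs.mpr hd)
    have h1 : r ∣ 1 := q.reduced ▸ Nat.dvd_gcd this hrd
    have := Nat.le_of_dvd one_pos h1
    have := hr.two_le
    omega
  have hvnum : padicValInt r q.num = 0 := padicValInt.eq_zero_of_not_dvd hnum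
  have hvden : 1 ≤ padicValNat r q.den :=
    one_le_padicValNat_of_dvd q.pos.ne' hrd
  have hval : padicValRat r q < 0 := by
    have hvden' : (1:ℤ) ≤ (padicValNat r q.den : ℤ) := by exact_mod_cast hvden
    rw [padicValRat_def, hvnum]
    omega
  have : 1 < padicNorm r q := by
    rw [padicNorm.eq_zpow_of_nonzero hq]
    calc (1 : ℚ) = (r : ℚ) ^ (0 : ℤ) := by norm_num
    _ < (r : ℚ) ^ (-padicValRat r q) := by
        apply zpow_lt_zpow_right₀
        · exact_mod_cast hr.one_lt
        · linarith
  exact absurd (h r hr) (not_le.mpr this)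

lemma eq_zero_of_ZP {ι : Type*} (p : ι → ℕ) [hp : ∀ i, Fact (p i).Prime]
    {q : ℚ} (hq : q ∈ ZP (Set.range p))
    (hnorm : ∀ i, padicNorm (p i) q ≤ 1) (habs : |q| < 1) : q = 0 := by
  have hden : q.den = 1 := by
    apply den_eq_one_of_padicNorm_le_one
    intro r hr
    haveI : Fact r.Prime := ⟨hr⟩
    by_cases hmem : r ∈ Set.range p
    · obtain ⟨i, rfl⟩ := hmem
      exact hnorm i
    · exact ZP_le_padicValSubring p r hmem hq
  have : q = (q.num : ℚ) := by
    conv_lhs => rw [← Rat.num_div_den q, hden]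
    simp
  rw [this] at habs ⊢
  have h2 : |q.num| < 1 := by exact_mod_cast (by rwa [← Int.cast_abs] at habs : ((|q.num| : ℤ) : ℚ) < 1)
  have h3 := abs_lt.mp h2
  have : q.num = 0 := by omega
  simp [this]

/-- **Separation of `(Z_(P))^N` inside `ℝ^N × ∏_{p ∈ P} ℚ_p^N`.**
Let `P = {p i}` be a finite set of primes, `k ≥ 3`, `G = ℝ^N × ∏_{p∈P} ℚ_p^N`,
`α : ℚ^N → G` the diagonal embedding and `𝒟 = [-1/k,1/k]^N × ∏_p ℤ_p^N`.  Then distinct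
points of `(Z_(P))^N` have disjoint `𝒟`-translates, and for finite `F ⊆ (Z_(P))^N` the
Haar measure (normalised by `μ(𝒟) = 1`) of `α(F) + 𝒟` equals `|F|`. -/
theorem separation_in_adelic_product
    {N : ℕ} (hN : 0 < N) {ι : Type*} [Fintype ι]
    (p : ι → ℕ) [hp : ∀ i, Fact (p i).Prime] (hinj : Function.Injective p)
    (k : ℕ) (hk : 3 ≤ k)
    (μ : Measure ((Fin N → ℝ) × ((i : ι) → Fin N → ℚ_[p i])))
    [μ.IsAddHaarMeasure]
    (D : Set ((Fin N → ℝ) × ((i : ι) → Fin N → ℚ_[p i])))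
    (hD : D = {z | (∀ j, |z.1 j| ≤ 1 / (k : ℝ)) ∧ ∀ i j, ‖z.2 i j‖ ≤ 1})
    (hμD : μ D = 1)
    (α : (Fin N → ℚ) → (Fin N → ℝ) × ((i : ι) → Fin N → ℚ_[p i]))
    (hα : ∀ x, α x = (fun j => (x j : ℝ), fun i j => ((x j : ℚ) : ℚ_[p i]))) :
    (∀ x y : Fin N → ℚ, (∀ j, x j ∈ ZP (Set.range p)) → (∀ j, y j ∈ ZP (Set.range p)) →
      x ≠ y → (α x +ᵥ D) ∩ (α y +ᵥ D) = ∅) ∧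
    (∀ F : Set (Fin N → ℚ), F.Finite → (∀ x ∈ F, ∀ j, x j ∈ ZP (Set.range p)) →
      μ (α '' F + D) = (F.encard : ℝ≥0∞)) := by
  have hk' : (0 : ℝ) < k := by positivity
  -- Part 1 : disjointness
  have part1 : ∀ x y : Fin N → ℚ, (∀ j, x j ∈ ZP (Set.range p)) →
      (∀ j, y j ∈ ZP (Set.range p)) → x ≠ y →
      (α x +ᵥ D) ∩ (α y +ᵥ D) = ∅ := by
    intro x y hx hy hxy
    rw [Set.eq_empty_iff_forall_notMem]
    rintro z ⟨hz1, hz2⟩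
    obtain ⟨d1, hd1, hzd1⟩ := hz1
    obtain ⟨d2, hd2, hzd2⟩ := hz2
    rw [hD] at hd1 hd2
    apply hxy
    funext j
    have hq0 : x j - y j = 0 := by
      apply eq_zero_of_ZP p (sub_mem (hx j) (hy j))
      · intro i
        have hvv : α x +ᵥ d1 = α y +ᵥ d2 := hzd1.trans hzd2.symm
        have h2 : (α x).2 i j + d1.2 i j = (α y).2 i j + d2.2 i j := by
          simpa [vadd_eq_add] using congrFun (congrFun (congrArg Prod.snd hvv) i) j
        rw [hα x, hα y] at h2
        simp only at h2
        have heq : ((x j - y j : ℚ) : ℚ_[p i]) = d2.2 i j - d1.2 i j := by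
          push_cast
          linear_combination h2
        have hnle : ‖((x j - y j : ℚ) : ℚ_[p i])‖ ≤ 1 := by
          rw [heq]
          calc ‖d2.2 i j - d1.2 i j‖ = ‖d2.2 i j + -(d1.2 i j)‖ := by rw [sub_eq_add_neg]
            _ ≤ max ‖d2.2 i j‖ ‖-(d1.2 i j)‖ := Padic.nonarchimedean _ _
            _ = max ‖d2.2 i j‖ ‖d1.2 i j‖ := by rw [norm_neg]
            _ ≤ 1 := max_le (hd2.2 i j) (hd1.2 i j)
        rw [Padic.eq_padicNorm] at hnle
        exact_mod_cast hnle
      · have hvv : α x +ᵥ d1 = α y +ᵥ d2 := hzd1.trans hzd2.symm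
        have h1 : (α x).1 j + d1.1 j = (α y).1 j + d2.1 j := by
          simpa [vadd_eq_add] using congrFun (congrArg Prod.fst hvv) j
        rw [hα x, hα y] at h1
        simp only at h1
        have heq : ((x j - y j : ℚ) : ℝ) = d2.1 j - d1.1 j := by
          push_cast
          linear_combination h1
        have habs : |((x j - y j : ℚ) : ℝ)| < 1 := by
          rw [heq]
          calc |d2.1 j - d1.1 j| ≤ |d2.1 j| + |d1.1 j| := abs_sub _ _
            _ ≤ 1 / (k : ℝ) + 1 / (k : ℝ) := add_le_add (hd2.1 j) (hd1.1 j)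
            _ < 1 := by
                rw [← add_div, div_lt_one hk']
                have : (3 : ℝ) ≤ (k : ℝ) := by exact_mod_cast hk
                linarith
        rw [← Rat.cast_abs] at habs
        exact_mod_cast habs
    linarith [hq0]
  refine ⟨part1, ?_⟩
  -- Part 2 : measure computation
  -- D is closed, hence measurable.
  have hDclosed : IsClosed D := by
    rw [hD]
    have : {z : (Fin N → ℝ) × ((i : ι) → Fin N → ℚ_[p i]) |
        (∀ j, |z.1 j| ≤ 1 / (k : ℝ)) ∧ ∀ i j, ‖z.2 i j‖ ≤ 1} =
        (⋂ j, {z | |z.1 j| ≤ 1 / (k : ℝ)}) ∩ ⋂ i, ⋂ j, {z | ‖z.2 i j‖ ≤ 1} := by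
      ext z; simp [Set.mem_iInter]
    rw [this]
    apply IsClosed.inter
    · apply isClosed_iInter
      intro j
      exact isClosed_le (by fun_prop) continuous_const
    · apply isClosed_iInter
      intro i
      apply isClosed_iInter
      intro j
      have hc : Continuous fun z : (Fin N → ℝ) × ((i : ι) → Fin N → ℚ_[p i]) => ‖z.2 i j‖ := by
        fun_prop
      exact isClosed_le hc continuous_const
  have hDmeas : MeasurableSet D := hDclosed.measurableSet
  have hvaddpre : ∀ a : (Fin N → ℝ) × ((i : ι) → Fin N → ℚ_[p i]),
      a +ᵥ D = (fun z => -a + z) ⁻¹' D := by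
    intro a
    ext z
    simp [Set.mem_vadd_set_iff_neg_vadd_mem]
  have hvaddmeas : ∀ a : (Fin N → ℝ) × ((i : ι) → Fin N → ℚ_[p i]), MeasurableSet (a +ᵥ D) := by
    intro a
    rw [hvaddpre]
    have hcont : Continuous fun z : (Fin N → ℝ) × ((i : ι) → Fin N → ℚ_[p i]) => -a + z := by
      fun_prop
    exact hcont.measurable hDmeas
  have hvaddμ : ∀ a : (Fin N → ℝ) × ((i : ι) → Fin N → ℚ_[p i]), μ (a +ᵥ D) = 1 := by
    intro a
    haveI : MeasurableAdd ((Fin N → ℝ) × ((i : ι) → Fin N → ℚ_[p i])) :=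
      ⟨fun _ => (continuous_const.add continuous_id).measurable,
        fun _ => (continuous_id.add continuous_const).measurable⟩
    rw [hvaddpre, measure_preimage_add, hμD]
  -- additivity over finite sets
  intro F hF
  refine Set.Finite.induction_on F hF (motive := fun F _ => (∀ x ∈ F, ∀ j, x j ∈ ZP (Set.range p)) → μ (α '' F + D) = (F.encard : ℝ≥0∞)) ?_ ?_
  · intro _
    simp
  · intro a s ha hs ih hmem
    have hmem' : ∀ x ∈ s, ∀ j, x j ∈ ZP (Set.range p) := fun x hx =>
      hmem x (Set.mem_insert_of_mem a hx)
    have hamem : ∀ j, a j ∈ ZP (Set.range p) := hmem a (Set.mem_insert a s)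
    have himg : α '' insert a s + D = (α a +ᵥ D) ∪ (α '' s + D) := by
      rw [Set.image_insert_eq, Set.insert_eq, Set.union_add, Set.singleton_add]
      rfl
    have hdisj : Disjoint (α a +ᵥ D) (α '' s + D) := by
      rw [Set.disjoint_iff_inter_eq_empty, Set.eq_empty_iff_forall_notMem]
      rintro z ⟨hz1, hz2⟩
      obtain ⟨_, ⟨x, hxs, rfl⟩, d, hd, rfl⟩ := hz2
      have : (α x +ᵥ D) ∩ (α a +ᵥ D) = ∅ :=
        part1 x a (hmem' x hxs) hamem (by rintro rfl; exact ha hxs)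
      have hz2' : α x + d ∈ α x +ᵥ D := ⟨d, hd, rfl⟩
      exact Set.eq_empty_iff_forall_notMem.mp this _ ⟨hz2', hz1⟩
    have hsmeas : MeasurableSet (α '' s + D) := by
      have : α '' s + D = ⋃ x ∈ s, (α x +ᵥ D) := by
        ext z
        constructor
        · rintro ⟨_, ⟨x, hx, rfl⟩, d, hd, rfl⟩
          exact Set.mem_biUnion hx ⟨d, hd, rfl⟩
        · rintro hz
          simp only [Set.mem_iUnion] at hz
          obtain ⟨x, hx, d, hd, rfl⟩ := hz
          exact ⟨α x, ⟨x, hx, rfl⟩, d, hd, rfl⟩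
      rw [this]
      exact MeasurableSet.biUnion hs.countable (fun x _ => hvaddmeas (α x))
    rw [himg, measure_union hdisj hsmeas, hvaddμ, ih hmem',
      Set.encard_insert_of_notMem ha]
    push_cast
    rw [add_comm]
end
end

section
/- Let N be a positive integer, p a prime, k ≥ 3 an integer, and h the maximal nonnegative integer such that p^h ≤ k. Then for every positive integer m divisible by p^h, one has D_{p,N}(k) ⊆ α_p(E_m) + ℤ_p^N, where D_{p,N}(k) = { x ∈ ℚ_p^N : max_i |x_i|_p ≤ k } and α_p : ℚ^N → ℚ_p^N is the coordinatewise inclusion. -/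
open Pointwise

noncomputable section

/-- **Discs of `ℚ_p^N` are covered by `E_m` up to `ℤ_p^N`.**
Let `p` be a prime, `k ≥ 3`, and `h` the maximal nonnegative integer with `p^h ≤ k`.
Then for every positive integer `m` divisible by `p^h`,
`D_{p,N}(k) ⊆ α_p(E_m) + ℤ_p^N`. -/
theorem disc_subset_Em_add_intPolydisc
    (p : ℕ) [Fact p.Prime] {N : ℕ} (hN : 0 < N)
    (k h : ℕ) (hk : 3 ≤ k) (hph : p ^ h ≤ k) (hph' : k < p ^ (h + 1))
    (m : ℕ) (hm : 0 < m) (hdvd : p ^ h ∣ m) :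
    {x : Fin N → ℚ_[p] | ∀ i, ‖x i‖ ≤ (k : ℝ)} ⊆
      ((fun c : Fin N → ℚ => fun i => ((c i : ℚ) : ℚ_[p])) '' Em N m) +
        {x : Fin N → ℚ_[p] | ∀ i, ‖x i‖ ≤ 1} := by
  intro x hx
  have hp1 : 1 < p := (Fact.out : p.Prime).one_lt
  have hpR : (1 : ℝ) < (p : ℝ) := by exact_mod_cast hp1
  obtain ⟨t, ht⟩ := hdvd
  have htpos : 0 < t := by
    rcases Nat.eq_zero_or_pos t with h0 | h0
    · exfalso; rw [h0, mul_zero] at ht; omega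
    · exact h0
  -- each coordinate has norm ≤ p^h
  have hxh : ∀ i, ‖x i‖ ≤ (p : ℝ) ^ (h : ℤ) := by
    intro i
    rw [Padic.norm_le_pow_iff_norm_lt_pow_add_one]
    calc ‖x i‖ ≤ (k : ℝ) := hx i
      _ < (p : ℝ) ^ (h + 1 : ℕ) := by exact_mod_cast hph'
      _ = (p : ℝ) ^ ((h : ℤ) + 1) := by
        rw [← zpow_natCast]; norm_num
  -- the scaled coordinates are p-adic integers
  have hz : ∀ i, ‖(p : ℚ_[p]) ^ h * x i‖ ≤ 1 := by
    intro i
    rw [norm_mul, norm_pow, Padic.norm_p]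
    have : ((p : ℝ)⁻¹) ^ h = ((p : ℝ) ^ (h : ℤ))⁻¹ := by
      rw [← zpow_natCast, ← zpow_neg, zpow_neg, inv_zpow]
    rw [this]
    rw [inv_mul_le_iff₀ (by positivity), mul_one]
    exact hxh i
  set z : Fin N → ℤ_[p] := fun i => ⟨(p : ℚ_[p]) ^ h * x i, hz i⟩ with hzdef
  set a : Fin N → ℕ := fun i => (z i).appr h with hadef
  set c : Fin N → ℚ := fun i => ((a i * t : ℕ) : ℚ) / (m : ℚ) with hcdef
  have happr : ∀ i, ‖z i - ((a i : ℤ_[p]))‖ ≤ (p : ℝ) ^ (-(h : ℤ)) := by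
    intro i
    rw [PadicInt.norm_le_pow_iff_mem_span_pow]
    exact PadicInt.appr_spec h (z i)
  have hmQ : (m : ℚ_[p]) = (p : ℚ_[p]) ^ h * t := by exact_mod_cast congrArg (Nat.cast : ℕ → ℚ_[p]) ht
  have hpne : ((p : ℚ_[p]) ^ h) ≠ 0 := pow_ne_zero _ (Nat.cast_ne_zero.mpr (Nat.Prime.ne_zero Fact.out))
  have htne : ((t : ℚ_[p])) ≠ 0 := Nat.cast_ne_zero.mpr htpos.ne'
  -- the key norm bound
  have hkey : ∀ i, ‖x i - ((c i : ℚ) : ℚ_[p])‖ ≤ 1 := by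
    intro i
    have hc : ((c i : ℚ) : ℚ_[p]) = (a i : ℚ_[p]) / (p : ℚ_[p]) ^ h := by
      simp only [hcdef]
      push_cast
      rw [hmQ]
      field_simp
    have hdecomp : x i - ((c i : ℚ) : ℚ_[p]) =
        ((z i - (a i : ℤ_[p])) : ℚ_[p]) / (p : ℚ_[p]) ^ h := by
      rw [hc]
      push_cast [hzdef]
      field_simp
    rw [hdecomp, norm_div, norm_pow, Padic.norm_p]
    have hnorm : ‖((z i : ℚ_[p]) - (((a i : ℤ_[p])) : ℚ_[p]))‖ ≤ (p : ℝ) ^ (-(h : ℤ)) := by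
      have h1 := happr i
      rw [← PadicInt.padic_norm_e_of_padicInt] at h1
      push_cast at h1 ⊢
      exact h1
    calc ‖((z i : ℚ_[p]) - (((a i : ℤ_[p])) : ℚ_[p]))‖ / ((p : ℝ)⁻¹) ^ h
        ≤ (p : ℝ) ^ (-(h : ℤ)) / ((p : ℝ)⁻¹) ^ h := by
          apply div_le_div_of_nonneg_right hnorm <;> positivity
      _ = 1 := by
          rw [← zpow_natCast ((p : ℝ)⁻¹), inv_zpow, ← zpow_neg, div_eq_mul_inv, ← zpow_neg,
            neg_neg, ← zpow_add₀ (by positivity : (p:ℝ) ≠ 0)]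
          simp
  refine Set.mem_add.mpr ⟨fun i => ((c i : ℚ) : ℚ_[p]), ⟨c, ?_, rfl⟩,
    fun i => x i - ((c i : ℚ) : ℚ_[p]), fun i => hkey i,
    by funext i; simp only [Pi.add_apply, hcdef]; push_cast; ring⟩
  -- c ∈ Em N m
  intro i
  refine ⟨(a i * t : ℕ), ?_, by push_cast [hcdef]; ring_nf⟩
  have halt : a i < p ^ h := PadicInt.appr_lt (z i) h
  have : a i * t ≤ m := by
    calc a i * t ≤ (p ^ h) * t := Nat.mul_le_mul_right t (le_of_lt halt)
      _ = m := ht.symm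
  rw [abs_of_nonneg (by positivity)]
  exact_mod_cast this
end
end

section
/- Let N be a positive integer, p a prime, φ : ℚ^N → ℚ^N an endomorphism with matrix (a_{ij}), and φ_p : ℚ_p^N → ℚ_p^N the ℚ_p-linear endomorphism with the same matrix. Write ‖φ_p‖_p = max_{1≤i≤N} Σ_{j=1}^N |a_{ij}|_p, and for positive integers m, n set T^p_n(φ, E_m) = α_p(T_n(φ, E_m)) + ℤ_p^N. Then: (1) T^p_n(φ, E_m) ⊆ T_n(φ_p, D_{p,N}(|1/m|_p)) for all m, n ≥ 1; (2) if h is the maximal nonnegative integer with p^h ≤ ‖φ_p‖_p and p^h divides m, then T_n^≤(φ_p, ℤ_p^N) ⊆ T^p_n(φ, E_m) for all n ≥ 1. -/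
open Pointwise

noncomputable section

lemma traj_succ {G : Type*} [AddCommGroup G] (φ : G →+ G) (C : Set G) (n : ℕ) :
    traj ⇑φ C (n + 1) = C + ⇑φ '' traj ⇑φ C n := by
  unfold traj
  have h1 : ∀ i : ℕ, (⇑φ)^[i + 1] '' C = ⇑φ '' ((⇑φ)^[i] '' C) := by
    intro i; rw [Function.iterate_succ', Set.image_comp]
  rw [Finset.sum_range_succ']
  simp only [h1, Function.iterate_zero, Set.image_id]
  rw [← Set.image_finset_sum φ, add_comm]

lemma aux_approx (p : ℕ) [hp : Fact p.Prime] (m h : ℕ) (hm : 0 < m) (hdvd : p ^ h ∣ m)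
    (x : ℚ_[p]) (hx : ‖x‖ ≤ (p : ℝ) ^ h) :
    ∃ j : ℤ, |j| ≤ (m : ℤ) ∧ ‖x - ((((j : ℚ) / (m : ℚ)) : ℚ) : ℚ_[p])‖ ≤ 1 := by
  have hp1 : (1 : ℝ) < p := by exact_mod_cast hp.out.one_lt
  have hp0 : (0 : ℝ) < p := by linarith
  set v := m.factorization p with hv
  have hdvd_iff : ∀ k : ℕ, p ^ k ∣ m ↔ k ≤ v := fun k =>
    hp.out.pow_dvd_iff_le_factorization hm.ne'
  have hpv : p ^ v ∣ m := (hdvd_iff v).mpr le_rfl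
  have hhv : h ≤ v := (hdvd_iff h).mp hdvd
  have hnot : ¬ p ^ (v + 1) ∣ m := fun hc => by simpa using (hdvd_iff _).mp hc
  have hmle : ‖(m : ℚ_[p])‖ ≤ (p : ℝ) ^ (-(v : ℤ)) := by
    have := (Padic.norm_int_le_pow_iff_dvd (p := p) (m : ℤ) v).mpr
      (by exact_mod_cast hpv)
    simpa using this
  have hmge : (p : ℝ) ^ (-(v : ℤ)) ≤ ‖(m : ℚ_[p])‖ := by
    by_contra hc
    push_neg at hc
    have : ‖((m : ℤ) : ℚ_[p])‖ ≤ (p : ℝ) ^ (-((v : ℤ) + 1)) := by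
      rw [Padic.norm_le_pow_iff_norm_lt_pow_add_one]
      simpa using hc
    have := (Padic.norm_int_le_pow_iff_dvd (p := p) (m : ℤ) (v + 1)).mp
      (by simpa [neg_add] using this)
    exact hnot (by exact_mod_cast this)
  have hy : ‖(m : ℚ_[p]) * x‖ ≤ 1 := by
    rw [norm_mul]
    calc ‖(m : ℚ_[p])‖ * ‖x‖ ≤ (p : ℝ) ^ (-(v : ℤ)) * (p : ℝ) ^ (h : ℤ) := by
          apply mul_le_mul hmle (by exact_mod_cast hx) (norm_nonneg _)
            (zpow_nonneg hp0.le _)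
      _ = (p : ℝ) ^ ((h : ℤ) - v) := by rw [← zpow_add₀ hp0.ne']; ring_nf
      _ ≤ (p : ℝ) ^ (0 : ℤ) := by
          apply zpow_le_zpow_right₀ hp1.le; omega
      _ = 1 := by norm_num
  set z : ℤ_[p] := ⟨(m : ℚ_[p]) * x, hy⟩ with hz
  refine ⟨(z.appr v : ℤ), ?_, ?_⟩
  · have h1 : z.appr v < p ^ v := z.appr_lt v
    have h2 : p ^ v ≤ m := Nat.le_of_dvd hm hpv
    rw [abs_of_nonneg (by positivity)]
    exact_mod_cast (h1.le.trans h2)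
  · have hspec := (PadicInt.norm_le_pow_iff_mem_span_pow (z - (z.appr v : ℤ_[p])) v).mpr
      (z.appr_spec v)
    have hcast : ((z - (z.appr v : ℤ_[p]) : ℤ_[p]) : ℚ_[p])
        = (m : ℚ_[p]) * x - (z.appr v : ℚ_[p]) := by
      push_cast [hz]
      rfl
    have hnorm : ‖(m : ℚ_[p]) * x - (z.appr v : ℚ_[p])‖ ≤ (p : ℝ) ^ (-(v : ℤ)) := by
      rw [← hcast]
      simpa [PadicInt.norm_def] using hspec
    have hm0 : (m : ℚ_[p]) ≠ 0 := by
      exact_mod_cast Nat.cast_ne_zero.mpr hm.ne'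
    have key : x - ((((z.appr v : ℤ) : ℚ) / (m : ℚ) : ℚ) : ℚ_[p])
        = ((m : ℚ_[p]) * x - (z.appr v : ℚ_[p])) / (m : ℚ_[p]) := by
      field_simp
      push_cast
      field_simp
    rw [key, norm_div]
    rw [div_le_one (lt_of_lt_of_le (by positivity) hmge)]
    exact hnorm.trans hmge

/-- **Comparison of the `p`-adic trajectories `T^p_n(φ, E_m)` with trajectories of `φ_p`.**
Let `φ` be an endomorphism of `ℚ^N` with matrix `A`, and `φ_p` the endomorphism of
`ℚ_p^N` with the same matrix.  Then (1) `T^p_n(φ,E_m) ⊆ T_n(φ_p, D_{p,N}(|1/m|_p))`;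
and (2) if `h` is the maximal nonnegative integer with `p^h ≤ ‖φ_p‖_p`
(where `‖φ_p‖_p = max_i Σ_j |A i j|_p`) and `p^h ∣ m`, then
`T_n^≤(φ_p, ℤ_p^N) ⊆ T^p_n(φ, E_m)`. -/
theorem padic_trajectory_comparison
    (p : ℕ) [Fact p.Prime] {N : ℕ} (hN : 0 < N)
    (φ : (Fin N → ℚ) →+ (Fin N → ℚ)) (A : Matrix (Fin N) (Fin N) ℚ)
    (hφ : ∀ x, φ x = A.mulVec x) :
    (∀ m n : ℕ, 0 < m → 1 ≤ n →
      ((fun c : Fin N → ℚ => fun i => ((c i : ℚ) : ℚ_[p])) '' traj (⇑φ) (Em N m) n) +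
          {x : Fin N → ℚ_[p] | ∀ i, ‖x i‖ ≤ 1} ⊆
        traj (A.map (fun q : ℚ => ((q : ℚ) : ℚ_[p]))).mulVec
          {x : Fin N → ℚ_[p] | ∀ i, ‖x i‖ ≤ ‖(((m : ℚ))⁻¹ : ℚ_[p])‖} n) ∧
    (∀ m h : ℕ, 0 < m →
      ((p : ℝ) ^ h ≤ ⨆ i : Fin N, ∑ j : Fin N, ‖((A i j : ℚ) : ℚ_[p])‖) →
      ((⨆ i : Fin N, ∑ j : Fin N, ‖((A i j : ℚ) : ℚ_[p])‖) < (p : ℝ) ^ (h + 1)) →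
      p ^ h ∣ m →
      ∀ n : ℕ, 1 ≤ n →
        trajLe (A.map (fun q : ℚ => ((q : ℚ) : ℚ_[p]))).mulVec
            {x : Fin N → ℚ_[p] | ∀ i, ‖x i‖ ≤ 1} n ⊆
          ((fun c : Fin N → ℚ => fun i => ((c i : ℚ) : ℚ_[p])) '' traj (⇑φ) (Em N m) n) +
            {x : Fin N → ℚ_[p] | ∀ i, ‖x i‖ ≤ 1}) := by
  have hprime : p.Prime := Fact.out
  have hp1 : (1 : ℝ) < p := by exact_mod_cast hprime.one_lt
  set B := A.map (fun q : ℚ => ((q : ℚ) : ℚ_[p])) with hB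
  set pm : (Fin N → ℚ) → (Fin N → ℚ_[p]) := fun c => fun i => ((c i : ℚ) : ℚ_[p]) with hpm
  set S : Set (Fin N → ℚ_[p]) := {x | ∀ i, ‖x i‖ ≤ 1} with hS
  -- pm is additive
  have pm_add : ∀ a b, pm (a + b) = pm a + pm b := by
    intro a b; funext i; simp [hpm]
  have pm_zero : pm 0 = 0 := by funext i; simp [hpm]
  set pmHom : (Fin N → ℚ) →+ (Fin N → ℚ_[p]) :=
    { toFun := pm, map_zero' := pm_zero, map_add' := pm_add } with hpmHom
  -- commutation with the matrix
  have comm : ∀ c, pm (φ c) = B.mulVec (pm c) := by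
    intro c
    funext i
    rw [hφ]
    simp only [hpm, hB, Matrix.mulVec, dotProduct, Matrix.map_apply]
    push_cast
    rfl
  have commIter : ∀ (k : ℕ) (c), pm ((⇑φ)^[k] c) = (B.mulVec)^[k] (pm c) := by
    intro k
    induction k with
    | zero => intro c; simp
    | succ k ih =>
      intro c
      rw [Function.iterate_succ_apply', Function.iterate_succ_apply', comm, ih]
  constructor
  · -- Part 1
    intro m n hm hn x hx
    set ε : ℝ := ‖(((m : ℚ))⁻¹ : ℚ_[p])‖ with hε
    have hmQ0 : ((m : ℚ) : ℚ_[p]) ≠ 0 := by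
      exact_mod_cast Nat.cast_ne_zero.mpr hm.ne'
    have hmnorm_pos : 0 < ‖((m : ℚ) : ℚ_[p])‖ := norm_pos_iff.mpr hmQ0
    have hε_eq : ε = ‖((m : ℚ) : ℚ_[p])‖⁻¹ := by
      rw [hε, ← norm_inv]
    have hmle1 : ‖((m : ℚ) : ℚ_[p])‖ ≤ 1 := by
      have : ((m : ℚ) : ℚ_[p]) = ((m : ℤ) : ℚ_[p]) := by push_cast; ring
      rw [this]
      exact Padic.norm_int_le_one _
    have hε1 : 1 ≤ ε := by
      rw [hε_eq]
      exact (one_le_inv₀ hmnorm_pos).mpr hmle1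
    -- norms of elements of Em
    have hEm_norm : ∀ c ∈ Em N m, ∀ i, ‖pm c i‖ ≤ ε := by
      intro c hc i
      obtain ⟨j, hj, hcij⟩ := hc i
      rw [hpm]
      simp only
      rw [hcij, hε_eq]
      push_cast
      rw [norm_div]
      have hj1 : ‖((j : ℤ) : ℚ_[p])‖ ≤ 1 := Padic.norm_int_le_one _
      calc ‖((j : ℤ) : ℚ_[p])‖ / ‖((m : ℚ) : ℚ_[p])‖ ≤ 1 / ‖((m : ℚ) : ℚ_[p])‖ := by
            gcongr
        _ = ‖((m : ℚ) : ℚ_[p])‖⁻¹ := one_div _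
    -- decompose x
    rw [Set.mem_add] at hx
    obtain ⟨a, ha, z, hzS, hxz⟩ := hx
    obtain ⟨t, ht, rfl⟩ := ha
    have hzS' : ∀ i, ‖z i‖ ≤ 1 := hzS
    rw [traj, Set.mem_finset_sum] at ht
    obtain ⟨g, hg, hgsum⟩ := ht
    rw [← hxz]
    rw [traj, Set.mem_finset_sum]
    refine ⟨fun i => if i = 0 then pm (g 0) + z else pm (g i), ?_, ?_⟩
    · intro i hi
      by_cases h0 : i = 0
      · subst h0
        simp only [if_pos rfl]
        obtain ⟨c, hc, hgc⟩ := hg hi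
        rw [Function.iterate_zero_apply] at hgc
        rw [Function.iterate_zero, Set.image_id, ← hgc]
        intro i2
        calc ‖(pm c + z) i2‖ = ‖pm c i2 + z i2‖ := rfl
          _ ≤ max ‖pm c i2‖ ‖z i2‖ := Padic.nonarchimedean _ _
          _ ≤ ε := max_le (hEm_norm c hc i2) ((hzS' i2).trans hε1)
      · simp only [if_neg h0]
        obtain ⟨c, hc, hgc⟩ := hg hi
        refine ⟨pm c, fun i2 => hEm_norm c hc i2, ?_⟩
        rw [← commIter, hgc]
    · have h0mem : (0 : ℕ) ∈ Finset.range n := Finset.mem_range.mpr (by omega)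
      have hsum_congr : ∑ i ∈ (Finset.range n).erase 0,
          (if i = 0 then pm (g 0) + z else pm (g i))
          = ∑ i ∈ (Finset.range n).erase 0, pm (g i) :=
        Finset.sum_congr rfl fun i hi => by rw [if_neg (Finset.ne_of_mem_erase hi)]
      have hpmt : pm t = ∑ i ∈ Finset.range n, pm (g i) := by
        rw [← hgsum]
        exact map_sum pmHom g (Finset.range n)
      rw [← Finset.add_sum_erase _ _ h0mem, hsum_congr, if_pos rfl, hpmt,
        ← Finset.add_sum_erase _ (fun i => pm (g i)) h0mem]
      abel
  · -- Part 2
    intro m h hm hsup_ge hsup_lt hdvd n hn x hx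
    have hψS : ∀ y : Fin N → ℚ_[p], (∀ i, ‖y i‖ ≤ 1) → ∀ i,
        ‖B.mulVec y i‖ ≤ (p : ℝ) ^ h := by
      intro y hy i
      have h1 : ‖B.mulVec y i‖ ≤ ∑ j, ‖((A i j : ℚ) : ℚ_[p])‖ := by
        have hmv : B.mulVec y i = ∑ j, ((A i j : ℚ) : ℚ_[p]) * y j := by
          simp [hB, Matrix.mulVec, dotProduct, Matrix.map_apply]
        rw [hmv]
        calc ‖∑ j, ((A i j : ℚ) : ℚ_[p]) * y j‖ ≤ ∑ j, ‖((A i j : ℚ) : ℚ_[p]) * y j‖ :=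
              norm_sum_le _ _
          _ ≤ ∑ j, ‖((A i j : ℚ) : ℚ_[p])‖ := Finset.sum_le_sum fun j _ => by
              rw [norm_mul]
              exact mul_le_of_le_one_right (norm_nonneg _) (hy j)
      have h2 : (∑ j, ‖((A i j : ℚ) : ℚ_[p])‖ : ℝ)
          ≤ ⨆ i, ∑ j, ‖((A i j : ℚ) : ℚ_[p])‖ :=
        le_ciSup (f := fun i : Fin N => ∑ j, ‖((A i j : ℚ) : ℚ_[p])‖)
          (Set.finite_range _).bddAbove i
      have h3 : ‖B.mulVec y i‖ < (p : ℝ) ^ ((h : ℤ) + 1) := by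
        have := lt_of_le_of_lt (h1.trans h2) hsup_lt
        calc ‖B.mulVec y i‖ < (p : ℝ) ^ (h + 1) := this
          _ = (p : ℝ) ^ ((h : ℤ) + 1) := by
            rw [show ((h : ℤ) + 1) = ((h + 1 : ℕ) : ℤ) by push_cast; ring, zpow_natCast]
      have := (Padic.norm_le_pow_iff_norm_lt_pow_add_one (B.mulVec y i) (h : ℤ)).mpr h3
      calc ‖B.mulVec y i‖ ≤ (p : ℝ) ^ (h : ℤ) := this
        _ = (p : ℝ) ^ h := zpow_natCast _ _
    have happrox : ∀ y : Fin N → ℚ_[p], (∀ i, ‖y i‖ ≤ (p : ℝ) ^ h) →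
        ∃ c ∈ Em N m, ∀ i, ‖y i - pm c i‖ ≤ 1 := by
      intro y hy
      choose j hj1 hj2 using fun i => aux_approx p m h hm hdvd (y i) (hy i)
      exact ⟨fun i => (j i : ℚ) / m, fun i => ⟨j i, hj1 i, rfl⟩, fun i => hj2 i⟩
    have hEm0 : (0 : Fin N → ℚ) ∈ Em N m := fun i =>
      ⟨0, by simp, by simp⟩
    have key : ∀ k : ℕ, ∀ w : Fin N → ℚ_[p], (∀ i, ‖w i‖ ≤ 1) →
        ∃ t ∈ traj ⇑φ (Em N m) (k + 1), ∃ s : Fin N → ℚ_[p],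
          (∀ i, ‖s i‖ ≤ 1) ∧ (B.mulVec)^[k] w = pm t + s := by
      intro k
      induction k with
      | zero =>
        intro w hw
        refine ⟨0, ?_, w, hw, by simp [pm_zero]⟩
        have h1 : traj ⇑φ (Em N m) 1 = (⇑φ)^[0] '' Em N m := by
          rw [traj, Finset.sum_range_one]
        rw [h1]
        exact ⟨0, hEm0, by simp⟩
      | succ k ih =>
        intro w hw
        obtain ⟨t, ht, s, hs, heq⟩ := ih w hw
        obtain ⟨c, hc, hsc⟩ := happrox (B.mulVec s) (hψS s hs)
        refine ⟨c + φ t, ?_, B.mulVec s - pm c, fun i => by simpa using hsc i, ?_⟩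
        · rw [traj_succ]
          exact Set.add_mem_add hc ⟨t, ht, rfl⟩
        · rw [Function.iterate_succ_apply', heq, Matrix.mulVec_add, ← comm, pm_add]
          abel
    rw [trajLe, Set.mem_add] at hx
    obtain ⟨s, hsS, y, ⟨w, hwS, rfl⟩, hxeq⟩ := hx
    have hwS' : ∀ i, ‖w i‖ ≤ 1 := hwS
    have hsS' : ∀ i, ‖s i‖ ≤ 1 := hsS
    obtain ⟨t, ht, s', hs', heq⟩ := key (n - 1) w hwS'
    have hn' : n - 1 + 1 = n := by omega
    rw [hn'] at ht
    rw [← hxeq, heq, Set.mem_add]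
    refine ⟨pm t, ⟨t, ht, rfl⟩, s' + s, ?_, by abel⟩
    intro i
    calc ‖(s' + s) i‖ = ‖s' i + s i‖ := rfl
      _ ≤ max ‖s' i‖ ‖s i‖ := Padic.nonarchimedean _ _
      _ ≤ 1 := max_le (hs' i) (hsS' i)
end
end

section
/- Let N be a positive integer, f(X) = X^N + a_1 X^{N-1} + ⋯ + a_N ∈ ℚ[X] a monic polynomial, and s the minimal positive integer such that s·f(X) ∈ ℤ[X]. Let p be a prime and K a finite extension of ℚ_p, equipped with the (unique) multiplicative nonarchimedean norm |·| extending the p-adic norm, over which f splits, with roots λ_1, …, λ_N ∈ K counted with multiplicity. Then log|1/s|_p = Σ_{i : |λ_i| > 1} log|λ_i|, where |·|_p is the p-adic absolute value on ℚ. -/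
open Polynomial

noncomputable section

section PadicMahlerAux
open IsUltrametricDist NNReal
set_option linter.unusedSectionVars false
set_option linter.unusedSectionVars false
namespace PMA
variable {K : Type*} [NormedField K] [IsUltrametricDist K]

lemma nn_sub_le (a b : K) : ‖a - b‖₊ ≤ max ‖a‖₊ ‖b‖₊ := by
  simpa [sub_eq_add_neg] using nnnorm_add_le_max a (-b)

lemma nn_sub_eq_left {a b : K} (h : ‖b‖₊ < ‖a‖₊) : ‖a - b‖₊ = ‖a‖₊ := by
  have := nnnorm_add_eq_max_of_nnnorm_ne_nnnorm (x := a) (y := -b) (by simpa using h.ne')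
  simpa [sub_eq_add_neg, max_eq_left h.le] using this

lemma nn_sub_eq_right {a b : K} (h : ‖a‖₊ < ‖b‖₊) : ‖a - b‖₊ = ‖b‖₊ := by
  have := nnnorm_add_eq_max_of_nnnorm_ne_nnnorm (x := a) (y := -b) (by simpa using h.ne)
  simpa [sub_eq_add_neg, max_eq_right h.le] using this

/-- Gauss norm: sup of coefficient norms. -/
def gn (Q : K[X]) : ℝ≥0 := Q.support.sup fun j => ‖Q.coeff j‖₊

lemma coeff_le_gn (Q : K[X]) (j : ℕ) : ‖Q.coeff j‖₊ ≤ gn Q := by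
  by_cases h : j ∈ Q.support
  · exact Finset.le_sup (f := fun j => ‖Q.coeff j‖₊) h
  · simp [Polynomial.notMem_support_iff.mp h]

lemma gn_le {Q : K[X]} {M : ℝ≥0} (h : ∀ j, ‖Q.coeff j‖₊ ≤ M) : gn Q ≤ M :=
  Finset.sup_le fun j _ => h j

lemma gn_one : gn (1 : K[X]) = 1 := by
  apply le_antisymm
  · refine gn_le fun j => ?_
    rcases Nat.eq_zero_or_pos j with rfl | hj
    · simp
    · simp [Polynomial.coeff_one, Nat.pos_iff_ne_zero.mp hj]
  · simpa using coeff_le_gn (1 : K[X]) 0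

lemma gn_eq_zero {Q : K[X]} (h : gn Q = 0) : Q = 0 := by
  ext j
  have := coeff_le_gn Q j
  rw [h, le_zero_iff, nnnorm_eq_zero] at this
  simp [this]

lemma gn_C_mul (c : K) (Q : K[X]) : gn (C c * Q) = ‖c‖₊ * gn Q := by
  have key : ∀ (c : K) (Q : K[X]), gn (C c * Q) ≤ ‖c‖₊ * gn Q := by
    intro c Q
    refine gn_le fun j => ?_
    rw [Polynomial.coeff_C_mul, nnnorm_mul]
    exact mul_le_mul_right (coeff_le_gn Q j) _
  refine le_antisymm (key c Q) ?_
  rcases eq_or_ne c 0 with rfl | hc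
  · simp
  · have := key c⁻¹ (C c * Q)
    rw [← mul_assoc, ← Polynomial.C_mul, inv_mul_cancel₀ hc, Polynomial.C_1, one_mul] at this
    calc ‖c‖₊ * gn Q ≤ ‖c‖₊ * (‖c⁻¹‖₊ * gn (C c * Q)) := mul_le_mul_right this _
      _ = gn (C c * Q) := by
          rw [← mul_assoc, ← nnnorm_mul, mul_inv_cancel₀ hc]
          simp

end PMA

namespace PMA2
open PMA
variable {K : Type*} [NormedField K] [IsUltrametricDist K]

lemma gn_mul_X_sub_C (Q : K[X]) (lam : K) :
    gn (Q * (X - C lam)) = gn Q * max 1 ‖lam‖₊ := by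
  rcases eq_or_ne Q 0 with rfl | hQ
  · simp [gn]
  set M := gn Q with hM
  have hM0 : M ≠ 0 := fun h => hQ (gn_eq_zero h)
  have hc0 : (Q * (X - C lam)).coeff 0 = Q.coeff 0 * (-lam) := by
    rw [Polynomial.mul_coeff_zero]
    congr 1
    simp
  have upper : gn (Q * (X - C lam)) ≤ M * max 1 ‖lam‖₊ := by
    refine gn_le fun j => ?_
    cases j with
    | zero =>
      rw [hc0, nnnorm_mul, nnnorm_neg]
      exact mul_le_mul' (coeff_le_gn Q 0) (le_max_right _ _)
    | succ a =>
      rw [Polynomial.coeff_mul_X_sub_C]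
      refine (nn_sub_le _ _).trans (max_le ?_ ?_)
      · exact le_trans (coeff_le_gn Q a) (le_mul_of_le_of_one_le le_rfl (le_max_left _ _))
      · rw [nnnorm_mul]
        exact mul_le_mul' (coeff_le_gn Q (a+1)) (le_max_right _ _)
  have hsupp : Q.support.Nonempty := Polynomial.nonempty_support_iff.mpr hQ
  set T := Q.support.filter (fun j => M ≤ ‖Q.coeff j‖₊) with hT
  have hTne : T.Nonempty := by
    obtain ⟨i, hi, hieq⟩ := Finset.exists_mem_eq_sup _ hsupp (fun j => ‖Q.coeff j‖₊)
    exact ⟨i, Finset.mem_filter.mpr ⟨hi, le_of_eq hieq⟩⟩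
  have memT_eq : ∀ j ∈ T, ‖Q.coeff j‖₊ = M := fun j hj =>
    le_antisymm (coeff_le_gn Q j) (Finset.mem_filter.mp hj).2
  have eq_memT : ∀ j, ‖Q.coeff j‖₊ = M → j ∈ T := by
    intro j hj
    refine Finset.mem_filter.mpr ⟨Polynomial.mem_support_iff.mpr ?_, hj.ge⟩
    intro h0
    rw [h0, nnnorm_zero] at hj
    exact hM0 hj.symm
  rcases le_or_gt ‖lam‖₊ 1 with hl | hl
  · rw [max_eq_left hl, mul_one]
    rw [max_eq_left hl, mul_one] at upper
    refine le_antisymm upper ?_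
    set j0 := T.max' hTne with hj0
    have hj0eq : ‖Q.coeff j0‖₊ = M := memT_eq _ (T.max'_mem hTne)
    have hnext : ‖Q.coeff (j0+1)‖₊ < M := by
      rcases lt_or_eq_of_le (coeff_le_gn Q (j0+1)) with h | h
      · exact h
      · exact absurd (T.le_max' _ (eq_memT _ h)) (by omega)
    calc M = ‖(Q * (X - C lam)).coeff (j0+1)‖₊ := by
          rw [Polynomial.coeff_mul_X_sub_C, nn_sub_eq_left, hj0eq]
          rw [nnnorm_mul, hj0eq]
          exact lt_of_le_of_lt (mul_le_of_le_one_right zero_le hl) hnext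
      _ ≤ gn (Q * (X - C lam)) := coeff_le_gn _ _
  · rw [max_eq_right hl.le]
    rw [max_eq_right hl.le] at upper
    refine le_antisymm upper ?_
    set j0 := T.min' hTne with hj0
    have hj0eq : ‖Q.coeff j0‖₊ = M := memT_eq _ (T.min'_mem hTne)
    rcases Nat.eq_zero_or_eq_succ_pred j0 with h0 | hsucc
    · calc M * ‖lam‖₊ = ‖(Q * (X - C lam)).coeff 0‖₊ := by
            rw [hc0, nnnorm_mul, nnnorm_neg, ← h0, hj0eq]
        _ ≤ gn (Q * (X - C lam)) := coeff_le_gn _ _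
    · set k := j0 - 1 with hk
      have hj0k : j0 = k + 1 := hsucc
      have hprev : ‖Q.coeff k‖₊ < M := by
        rcases lt_or_eq_of_le (coeff_le_gn Q k) with h | h
        · exact h
        · exact absurd (T.min'_le _ (eq_memT _ h)) (by omega)
      calc M * ‖lam‖₊ = ‖(Q * (X - C lam)).coeff (k+1)‖₊ := by
            rw [Polynomial.coeff_mul_X_sub_C, nn_sub_eq_right, nnnorm_mul, ← hj0k, hj0eq]
            rw [nnnorm_mul, ← hj0k, hj0eq]
            exact lt_of_lt_of_le hprev (le_mul_of_one_le_right zero_le hl.le)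
        _ ≤ gn (Q * (X - C lam)) := coeff_le_gn _ _

lemma gn_prod {ι : Type*} (s : Finset ι) (lam : ι → K) :
    gn (∏ i ∈ s, (X - C (lam i))) = ∏ i ∈ s, max 1 ‖lam i‖₊ := by
  induction s using Finset.cons_induction with
  | empty => simpa using gn_one
  | cons a s ha ih =>
    rw [Finset.prod_cons, Finset.prod_cons, mul_comm (X - C (lam a)), gn_mul_X_sub_C, ih, mul_comm]

end PMA2

end PadicMahlerAux

open PMA PMA2 NNReal

/-- **The `p`-adic contribution to the Mahler measure (Fact C, local form).**
Let `f ∈ ℚ[X]` be monic of degree `N`, `s` the minimal positive integer with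
`s·f ∈ ℤ[X]`, and `K` a finite extension of `ℚ_p` (with the unique multiplicative
nonarchimedean norm extending the `p`-adic norm) over which `f` splits with roots
`λ₁, …, λ_N`.  Then `log |1/s|_p = Σ_{‖λ_i‖ > 1} log ‖λ_i‖`. -/
theorem log_padicNorm_inv_s_eq_sum_log_roots
    (p : ℕ) [Fact p.Prime] {K : Type*} [NormedField K] [IsUltrametricDist K]
    [Algebra ℚ_[p] K] [FiniteDimensional ℚ_[p] K] [CompleteSpace K]
    (hext : ∀ x : ℚ_[p], ‖algebraMap ℚ_[p] K x‖ = ‖x‖)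
    {N : ℕ} (hN : 0 < N)
    (f : Polynomial ℚ) (hmonic : f.Monic) (hdeg : f.natDegree = N)
    (s : ℕ) (hs : 0 < s)
    (hsf : ∃ g : Polynomial ℤ, g.map (Int.castRingHom ℚ) = (s : ℚ) • f)
    (hmin : ∀ t : ℕ, 0 < t →
      (∃ g : Polynomial ℤ, g.map (Int.castRingHom ℚ) = (t : ℚ) • f) → s ≤ t)
    (lam : Fin N → K)
    (hsplit : f.map ((algebraMap ℚ_[p] K).comp (algebraMap ℚ ℚ_[p])) =
      ∏ i : Fin N, (X - C (lam i))) :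
    Real.log ((padicNorm p ((s : ℚ))⁻¹ : ℚ) : ℝ) =
      ∑ i : Fin N, if 1 < ‖lam i‖ then Real.log ‖lam i‖ else 0 := by
  classical
  obtain ⟨g, hg⟩ := hsf
  have hp : p.Prime := Fact.out
  set φ : ℚ →+* K := (algebraMap ℚ_[p] K).comp (algebraMap ℚ ℚ_[p]) with hφ
  set P : K[X] := ∏ i : Fin N, (X - C (lam i)) with hP
  -- primitivity of g
  have hprim : ∃ j, ¬ ((p : ℤ) ∣ g.coeff j) := by
    by_contra hcon
    push_neg at hcon
    obtain ⟨g', hg'⟩ := (Polynomial.C_dvd_iff_dvd_coeff (p : ℤ) g).mpr hcon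
    have hcoeffN : (g.coeff N : ℚ) = (s : ℚ) := by
      have h1 := congrArg (fun q : ℚ[X] => q.coeff N) hg
      have h2 : f.coeff N = 1 := by rw [← hdeg]; exact hmonic.coeff_natDegree
      simpa [Polynomial.coeff_map, Polynomial.coeff_smul, h2] using h1
    have hps : (p : ℤ) ∣ (s : ℤ) := by
      have : g.coeff N = (s : ℤ) := by exact_mod_cast hcoeffN
      rw [← this]; exact hcon N
    obtain ⟨t, ht⟩ : p ∣ s := Int.natCast_dvd_natCast.mp (by exact_mod_cast hps)
    have htpos : 0 < t := by
      rcases Nat.eq_zero_or_pos t with rfl | h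
      · omega
      · exact h
    have hCp : (C (p : ℚ) : ℚ[X]) ≠ 0 := by
      simp [hp.ne_zero]
    have hmap : C (p:ℚ) * g'.map (Int.castRingHom ℚ) = C (p:ℚ) * ((t:ℚ) • f) := by
      have : g.map (Int.castRingHom ℚ) = C (p:ℚ) * g'.map (Int.castRingHom ℚ) := by
        rw [hg', Polynomial.map_mul, Polynomial.map_C]
        norm_num
      rw [← this, hg, ht, Polynomial.smul_eq_C_mul, Polynomial.smul_eq_C_mul, ← mul_assoc,
        ← Polynomial.C_mul]
      push_cast
      ring_nf
    have hle := hmin t htpos ⟨g', mul_left_cancel₀ hCp hmap⟩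
    have : t < s := by
      have := hp.two_le
      calc t < p * t := by exact lt_mul_iff_one_lt_left htpos |>.mpr (by omega)
        _ = s := ht.symm
    omega
  -- G = g over K
  set G : K[X] := g.map (Int.castRingHom K) with hG
  have hGP : G = C ((s : K)) * P := by
    have hcomp : (Int.castRingHom K) = φ.comp (Int.castRingHom ℚ) :=
      Subsingleton.elim _ _
    rw [hG, hcomp, ← Polynomial.map_map, hg, Polynomial.smul_eq_C_mul, Polynomial.map_mul,
      Polynomial.map_C, hsplit, hP]
    congr 2
    exact map_natCast φ s
  -- norms of integers in K
  have hint : ∀ z : ℤ, ‖(z : K)‖ = ‖(z : ℚ_[p])‖ := by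
    intro z
    rw [← map_intCast (algebraMap ℚ_[p] K) z, hext]
  have hgn_le : gn G ≤ 1 := by
    refine gn_le fun j => ?_
    rw [← NNReal.coe_le_coe]
    have : G.coeff j = ((g.coeff j : ℤ) : K) := by
      rw [hG, Polynomial.coeff_map]; simp
    rw [coe_nnnorm, NNReal.coe_one, this, hint]
    exact Padic.norm_int_le_one _
  obtain ⟨j₁, hj₁⟩ := hprim
  have hgn_ge : (1 : ℝ≥0) ≤ gn G := by
    have hc : G.coeff j₁ = ((g.coeff j₁ : ℤ) : K) := by
      rw [hG, Polynomial.coeff_map]; simp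
    have h1 : ‖G.coeff j₁‖₊ = 1 := by
      have hlt := mt (Padic.norm_intCast_lt_one_iff (p := p) (k := g.coeff j₁)).mp hj₁
      have heq : ‖G.coeff j₁‖ = 1 :=
        le_antisymm (by rw [hc, hint]; exact Padic.norm_int_le_one _)
          (by rw [hc, hint]; exact not_lt.mp hlt)
      rw [← NNReal.coe_inj]
      simpa using heq
    rw [← h1]
    exact coeff_le_gn G j₁
  have hgnG : gn G = 1 := le_antisymm hgn_le hgn_ge
  have hkey : (‖(s : K)‖₊) * ∏ i : Fin N, max 1 ‖lam i‖₊ = 1 := by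
    calc ‖(s : K)‖₊ * ∏ i : Fin N, max 1 ‖lam i‖₊
        = gn (C ((s:K)) * P) := by rw [gn_C_mul, hP, gn_prod]
      _ = gn G := by rw [hGP]
      _ = 1 := hgnG
  -- real version
  have hkeyR : (‖(s : K)‖) * ∏ i : Fin N, max 1 ‖lam i‖ = 1 := by
    have := congrArg (fun x : ℝ≥0 => (x : ℝ)) hkey
    push_cast at this
    simpa using this
  have hsnorm : ‖(s : K)‖ = ((padicNorm p (s : ℚ) : ℚ) : ℝ) := by
    have h1 : ((s:ℚ) : ℚ_[p]) = ((s : ℕ) : ℚ_[p]) := by push_cast; ring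
    rw [show ((s : ℕ) : K) = algebraMap ℚ_[p] K ((s:ℕ) : ℚ_[p]) from (map_natCast _ s).symm,
      hext, ← h1, Padic.eq_padicNorm]
  have hsnorm_pos : 0 < ‖(s : K)‖ := by
    rcases (lt_or_eq_of_le (norm_nonneg ((s:K)))) with h | h
    · exact h
    · exfalso; rw [← h] at hkeyR; simp at hkeyR
  -- LHS rewrite
  have hlhs : ((padicNorm p ((s : ℚ))⁻¹ : ℚ) : ℝ) = ‖(s : K)‖⁻¹ := by
    rw [← Padic.eq_padicNorm, Rat.cast_inv, norm_inv, hsnorm,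
      Padic.eq_padicNorm]
  have hprod : ‖(s : K)‖⁻¹ = ∏ i : Fin N, max 1 ‖lam i‖ :=
    inv_eq_of_mul_eq_one_right hkeyR
  rw [hlhs, hprod, Real.log_prod (fun i _ => by positivity)]
  refine Finset.sum_congr rfl fun i _ => ?_
  by_cases h : 1 < ‖lam i‖
  · rw [if_pos h, max_eq_right h.le]
  · rw [if_neg h, max_eq_left (not_lt.mp h), Real.log_one]
end
end
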